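/- arXiv:0903.4848 — 6 statements merged into one kernel-verified Lean document; each statement's English description precedes it below -/
import Mathlib

section
/- Let b : ℕ × ℕ → ℂ (written b_m^n), let ℓ₀, j₀ ∈ ℕ, and assume: b_m^n = 0 whenever |m − n| > ℓ₀, and b_m^{m+ℓ₀} ≠ 0 for every m ≥ j₀. Let V = { (f_n)_{n∈ℕ} ∈ ℂ^ℕ : Σ_{n = max(0, m−ℓ₀)}^{m+ℓ₀} b_m^n f_n = 0 for every m ∈ ℕ }. Then for every integer K ≥ j₀ + ℓ₀ − 1 and every nonzero f ∈ V, the truncation Π_K f is nonzero; equivalently, ‖f‖_{ℓ²,K} := (Σ_{n=0}^{K} |f_n|²)^{1/2} > 0 for every f ∈ V with f ≠ 0. -/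
/-- The solution space `V` of the infinite band-diagonal system of simultaneous linear
equations determined by the array `b` with bandwidth parameter `ℓ₀`. -/
def bandSolutions (b : ℕ → ℕ → ℂ) (ℓ₀ : ℕ) : Set (ℕ → ℂ) :=
  {f : ℕ → ℂ | ∀ m : ℕ, ∑ n ∈ Finset.Icc (m - ℓ₀) (m + ℓ₀), b m n * f n = 0}

/-- Truncation operator `Π_K`: keep the entries of index `≤ K`, set the rest to `0`. -/
def truncSeq (K : ℕ) (f : ℕ → ℂ) : ℕ → ℂ := fun n => if n ≤ K then f n else 0

/-- Under the band condition (`b m n = 0` for `|m - n| > ℓ₀`) and the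
non-vanishing condition (`b m (m + ℓ₀) ≠ 0` for `m ≥ j₀`), for every `K ≥ j₀ + ℓ₀ - 1`
and every nonzero `f` in the solution space `V`, the truncation `Π_K f` is nonzero;
equivalently the truncated norm `‖f‖_{ℓ²,K} = (Σ_{n=0}^{K} |f n|²)^{1/2}` is positive. -/
theorem stmt2 (b : ℕ → ℕ → ℂ) (ℓ₀ j₀ : ℕ)
    (hband : ∀ m n : ℕ, |(m : ℤ) - (n : ℤ)| > (ℓ₀ : ℤ) → b m n = 0)
    (hnz : ∀ m : ℕ, j₀ ≤ m → b m (m + ℓ₀) ≠ 0) :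
    ∀ K : ℕ, j₀ + ℓ₀ - 1 ≤ K →
      ∀ f ∈ bandSolutions b ℓ₀, f ≠ 0 →
        truncSeq K f ≠ 0 ∧
        0 < Real.sqrt (∑ n ∈ Finset.range (K + 1), ‖f n‖ ^ 2) := by
  intro K hK f hf hf0
  have key : truncSeq K f ≠ 0 := by
    intro ht
    apply hf0
    have hz : ∀ n, n ≤ K → f n = 0 := by
      intro n hn
      have := congrFun ht n
      simpa [truncSeq, hn] using this
    have hall : ∀ n, f n = 0 := by
      intro n
      induction n using Nat.strong_induction_on with
      | _ n ih =>
        by_cases hn : n ≤ K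
        · exact hz n hn
        push_neg at hn
        have hmn : n = (n - ℓ₀) + ℓ₀ := by omega
        set m := n - ℓ₀ with hm
        have heq := hf m
        have hsum : ∑ k ∈ Finset.Icc (m - ℓ₀) (m + ℓ₀), b m k * f k = b m n * f n := by
          rw [Finset.sum_eq_single n]
          · intro k hk hkn
            simp only [Finset.mem_Icc] at hk
            have : f k = 0 := ih k (by omega)
            simp [this]
          · intro h
            exact absurd (Finset.mem_Icc.mpr ⟨by omega, by omega⟩) h
        rw [hsum] at heq
        have hb : b m n ≠ 0 := by rw [hmn]; exact hnz m (by omega)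
        exact (mul_eq_zero.mp heq).resolve_left hb
    funext n; exact hall n
  refine ⟨key, Real.sqrt_pos.mpr ?_⟩
  obtain ⟨n, hn⟩ := Function.ne_iff.mp key
  simp only [truncSeq, Pi.zero_apply] at hn
  by_cases hnK : n ≤ K
  · simp only [if_pos hnK] at hn
    refine Finset.sum_pos' (fun i _ => by positivity) ⟨n, Finset.mem_range.mpr (by omega), ?_⟩
    exact pow_pos (norm_pos_iff.mpr hn) 2
  · simp [hnK] at hn
end

section
/- Let V be a finite-dimensional subspace of the space ℂ^ℕ of complex sequences, let K ∈ ℕ, and assume Π_K f ≠ 0 for every nonzero f ∈ V. Let Ω be a continuous quadratic form on ℓ²(ℕ) (i.e., Ω(f) = Φ(f, f) for a bounded sesquilinear form Φ on ℓ²(ℕ) with Φ(f,f) real for all f) satisfying Ω(f) ≥ ‖f‖²_{ℓ²} for all f ∈ ℓ²(ℕ). For N ∈ ℕ set σ_{K,N}(f) = Ω(Π_N f)/‖f‖²_{ℓ²,K} for f ∈ V∖{0}, and let σ̲_{K,N} = min_{f ∈ V∖{0}} σ_{K,N}(f). Assume V ∩ ℓ²(ℕ) ≠ {0}, and let P denote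 the orthogonal projection of V onto V ∩ ℓ²(ℕ) with respect to the inner product ⟨f, g⟩_{ℓ²,K} := ⟨Π_K f, Π_K g⟩_{ℓ²} (which is positive definite on V). Then for every fixed c ≥ 1, the quantity sup { ‖P f − f‖_{ℓ²,K}/‖f‖_{ℓ²,K} : f ∈ V∖{0}, σ_{K,N}(f) ≤ c · σ̲_{K,N} } tends to 0 as N → ∞. -/
theorem memℓp_truncSeq (K : ℕ) (f : ℕ → ℂ) : Memℓp (truncSeq K f) 2 := by
  apply memℓp_gen
  apply summable_of_ne_finset_zero (s := Finset.range (K + 1))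
  intro n hn
  have hn' : ¬ n ≤ K := by simpa [Nat.lt_succ_iff] using hn
  simp [truncSeq, hn', Real.zero_rpow]

/-- The truncation `Π_K f` of an arbitrary sequence, seen as an element of `ℓ²(ℕ)`. -/
noncomputable def truncLp (K : ℕ) (f : ℕ → ℂ) : lp (fun _ : ℕ => ℂ) 2 :=
  ⟨truncSeq K f, memℓp_truncSeq K f⟩

open scoped ENNReal

noncomputable def truncL (m : ℕ) : (ℕ → ℂ) →ₗ[ℂ] lp (fun _ : ℕ => ℂ) 2 where
  toFun f := truncLp m f
  map_add' f g := by
    apply lp.ext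
    rw [lp.coeFn_add]
    funext n
    show truncSeq m (f + g) n = truncSeq m f n + truncSeq m g n
    by_cases h : n ≤ m <;> simp [truncSeq, h]
  map_smul' a f := by
    apply lp.ext
    rw [lp.coeFn_smul]
    funext n
    show truncSeq m (a • f) n = a • truncSeq m f n
    by_cases h : n ≤ m <;> simp [truncSeq, h]

lemma truncL_apply (m : ℕ) (f : ℕ → ℂ) : truncL m f = truncLp m f := rfl

lemma truncLp_coe (m : ℕ) (f : ℕ → ℂ) (n : ℕ) :
    (truncLp m f : ℕ → ℂ) n = if n ≤ m then f n else 0 := rfl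

lemma norm_truncLp_sq (m : ℕ) (f : ℕ → ℂ) :
    ‖truncLp m f‖ ^ 2 = ∑ n ∈ Finset.range (m + 1), ‖f n‖ ^ 2 := by
  have h := lp.norm_rpow_eq_tsum (p := 2) (by norm_num) (truncLp m f)
  have h2 : (2 : ℝ≥0∞).toReal = 2 := by norm_num
  rw [h2] at h
  have ht : ∑' n, ‖(truncLp m f : ℕ → ℂ) n‖ ^ (2:ℝ)
      = ∑ n ∈ Finset.range (m+1), ‖f n‖ ^ (2:ℝ) := by
    rw [tsum_eq_sum (s := Finset.range (m+1))]
    · apply Finset.sum_congr rfl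
      intro n hn
      have : n ≤ m := Nat.lt_succ_iff.mp (Finset.mem_range.mp hn)
      rw [truncLp_coe]
      simp [this]
    · intro n hn
      have hn' : ¬ n ≤ m := by simpa [Nat.lt_succ_iff] using hn
      rw [truncLp_coe]
      simp [hn', Real.zero_rpow]
  rw [ht] at h
  have hc : ∀ x : ℝ, 0 ≤ x → x ^ (2:ℝ) = x ^ 2 := fun x hx => by
    rw [← Real.rpow_natCast x 2]; norm_num
  rw [hc _ (norm_nonneg _)] at h
  rw [h]
  exact Finset.sum_congr rfl fun n _ => hc _ (norm_nonneg _)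

lemma norm_truncLp_mono (f : ℕ → ℂ) {m m' : ℕ} (h : m ≤ m') :
    ‖truncLp m f‖ ≤ ‖truncLp m' f‖ := by
  have h1 : ‖truncLp m f‖ ^ 2 ≤ ‖truncLp m' f‖ ^ 2 := by
    rw [norm_truncLp_sq, norm_truncLp_sq]
    apply Finset.sum_le_sum_of_subset_of_nonneg
    · exact Finset.range_subset_range.mpr (by omega)
    · intro n _ _; positivity
  nlinarith [norm_nonneg (truncLp m f), norm_nonneg (truncLp m' f)]

lemma norm_truncLp_le_of_memℓp (m : ℕ) {f : ℕ → ℂ} (hf : Memℓp f 2) :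
    ‖truncLp m f‖ ≤ ‖(⟨f, hf⟩ : lp (fun _ : ℕ => ℂ) 2)‖ := by
  set F : lp (fun _ : ℕ => ℂ) 2 := ⟨f, hf⟩
  have hsum : Summable (fun n => ‖f n‖ ^ (2:ℝ)) := hf.summable (by norm_num)
  have hc : ∀ x : ℝ, 0 ≤ x → x ^ (2:ℝ) = x ^ 2 := fun x hx => by
    rw [← Real.rpow_natCast x 2]; norm_num
  have hsum2 : Summable (fun n => ‖f n‖ ^ 2) := by
    apply hsum.congr; intro n; exact hc _ (norm_nonneg _)
  have hF : ‖F‖ ^ 2 = ∑' n, ‖f n‖ ^ 2 := by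
    have h := lp.norm_rpow_eq_tsum (p := 2) (by norm_num) F
    have h2 : (2 : ℝ≥0∞).toReal = 2 := by norm_num
    rw [h2, hc _ (norm_nonneg _)] at h
    rw [h]
    exact tsum_congr fun n => hc _ (norm_nonneg _)
  have h1 : ‖truncLp m f‖ ^ 2 ≤ ‖F‖ ^ 2 := by
    rw [norm_truncLp_sq, hF]
    exact hsum2.sum_le_tsum _ (fun n _ => by positivity)
  nlinarith [norm_nonneg (truncLp m f), norm_nonneg F]

lemma memℓp_of_trunc_bound {f : ℕ → ℂ} {B : ℝ}
    (h : ∀ m : ℕ, ‖truncLp m f‖ ^ 2 ≤ B) : Memℓp f 2 := by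
  apply memℓp_gen
  have hc : ∀ x : ℝ, 0 ≤ x → x ^ (2:ℝ) = x ^ 2 := fun x hx => by
    rw [← Real.rpow_natCast x 2]; norm_num
  have h2 : (2 : ℝ≥0∞).toReal = 2 := by norm_num
  rw [h2]
  have : Summable (fun n => ‖f n‖ ^ 2) := by
    apply summable_of_sum_range_le (c := B) (fun n => by positivity)
    intro n
    calc ∑ i ∈ Finset.range n, ‖f i‖ ^ 2
        ≤ ∑ i ∈ Finset.range (n+1), ‖f i‖ ^ 2 := by
          apply Finset.sum_le_sum_of_subset_of_nonneg
          · exact Finset.range_subset_range.mpr (by omega)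
          · intro i _ _; positivity
      _ = ‖truncLp n f‖ ^ 2 := (norm_truncLp_sq n f).symm
      _ ≤ B := h n
  apply this.congr; intro n; exact (hc _ (norm_nonneg _)).symm

lemma key_lemma (V : Submodule ℂ (ℕ → ℂ)) [FiniteDimensional ℂ V] (K : ℕ)
    (hK : ∀ f ∈ V, f ≠ 0 → truncSeq K f ≠ 0) (M : ℝ) {ε : ℝ} (hε : 0 < ε) :
    ∃ N₀ : ℕ, ∀ N, N₀ ≤ N → ∀ f ∈ V, ‖truncLp N f‖ ^ 2 ≤ M * ‖truncLp K f‖ ^ 2 →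
      ∃ g ∈ V, Memℓp g 2 ∧ ‖truncLp K (f - g)‖ ≤ ε * ‖truncLp K f‖ := by
  by_contra hcon
  push_neg at hcon
  choose N hNge f hfV hfM hfg using hcon
  -- coordinates
  set d := Module.finrank ℂ V with hd
  let e : V ≃ₗ[ℂ] (Fin d → ℂ) := (Module.finBasis ℂ V).equivFun
  let F : (Fin d → ℂ) →ₗ[ℂ] (ℕ → ℂ) := V.subtype.comp e.symm.toLinearMap
  have hFmem : ∀ c, F c ∈ V := fun c => (e.symm c).2
  have hFinj : Function.Injective F := by
    intro a b hab
    have : e.symm a = e.symm b := Subtype.ext hab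
    simpa using congrArg e this
  let T : ℕ → ((Fin d → ℂ) →ₗ[ℂ] lp (fun _ : ℕ => ℂ) 2) := fun m => (truncL m).comp F
  have hTval : ∀ m c, T m c = truncLp m (F c) := fun m c => rfl
  have hTcont : ∀ m, Continuous (T m) := fun m => (T m).continuous_of_finiteDimensional
  have hTKinj : LinearMap.ker (T K) = ⊥ := by
    rw [LinearMap.ker_eq_bot]
    intro a b hab
    by_cases hab0 : F a - F b = 0
    · exact hFinj (sub_eq_zero.mp hab0)
    · exfalso
      have hmem : F a - F b ∈ V := sub_mem (hFmem a) (hFmem b)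
      have := hK _ hmem hab0
      apply this
      have : truncLp K (F a - F b) = 0 := by
        have : T K (a - b) = 0 := by rw [map_sub, hab, sub_self]
        rw [hTval, map_sub] at this
        simpa [truncLp] using this
      exact congrArg Subtype.val this
  obtain ⟨C, hC0, hCanti⟩ := (T K).exists_antilipschitzWith hTKinj
  -- normalize the sequence
  have hr : ∀ j, 0 < ‖truncLp K (f j)‖ := by
    intro j
    have h0 := hfg j 0 (zero_mem V) zero_memℓp
    rw [sub_zero] at h0
    nlinarith [norm_nonneg (truncLp K (f j))]
  set r : ℕ → ℝ := fun j => ‖truncLp K (f j)‖ with hrdef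
  set u : ℕ → (Fin d → ℂ) := fun j => ((r j : ℂ))⁻¹ • e ⟨f j, hfV j⟩ with hu
  have hFu : ∀ j, F (u j) = ((r j : ℂ))⁻¹ • f j := by
    intro j
    simp only [hu, map_smul]
    congr 1
    show (V.subtype) (e.symm (e ⟨f j, hfV j⟩)) = f j
    rw [e.symm_apply_apply]
    rfl
  have hfu : ∀ j, f j = ((r j : ℂ)) • F (u j) := by
    intro j
    rw [hFu, smul_smul, mul_inv_cancel₀, one_smul]
    exact_mod_cast (hr j).ne'
  have hnorminv : ∀ j, ‖((r j : ℂ))⁻¹‖ = (r j)⁻¹ := by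
    intro j
    rw [norm_inv, Complex.norm_real, Real.norm_eq_abs, abs_of_pos (hr j)]
  have hTKu : ∀ j, ‖T K (u j)‖ = 1 := by
    intro j
    rw [hTval, hFu]
    show ‖truncL K (((r j : ℂ))⁻¹ • f j)‖ = 1
    rw [map_smul, norm_smul, hnorminv]
    exact inv_mul_cancel₀ (hr j).ne'
  have hubdd : ∀ j, u j ∈ Metric.closedBall (0 : Fin d → ℂ) C := by
    intro j
    rw [Metric.mem_closedBall, dist_zero_right]
    have h1 := hCanti.le_mul_dist (u j) 0
    rw [map_zero, dist_zero_right, dist_zero_right, hTKu j, mul_one] at h1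
    exact h1
  obtain ⟨c₀, _, φ, hφ, hφtend⟩ :=
    (isCompact_closedBall (0 : Fin d → ℂ) C).tendsto_subseq hubdd
  have hTmu : ∀ m j, m ≤ N (φ j) → ‖T m (u (φ j))‖ ^ 2 ≤ M := by
    intro m j hm
    have h1 : ‖T m (u (φ j))‖ ≤ ‖T (N (φ j)) (u (φ j))‖ := by
      rw [hTval, hTval]; exact norm_truncLp_mono _ hm
    have h2 : ‖T (N (φ j)) (u (φ j))‖ ^ 2 ≤ M := by
      rw [hTval, hFu]
      rw [← truncL_apply, map_smul, truncL_apply, norm_smul, hnorminv]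
      have hM := hfM (φ j)
      have hrj := hr (φ j)
      have hone : ((r (φ j))⁻¹) ^ 2 * ‖truncLp K (f (φ j))‖ ^ 2 = 1 := by
        show ((r (φ j))⁻¹) ^ 2 * (r (φ j)) ^ 2 = 1
        have hr0 : r (φ j) ≠ 0 := hrj.ne'
        field_simp
      nlinarith [mul_le_mul_of_nonneg_left hM (sq_nonneg ((r (φ j))⁻¹)),
        norm_nonneg (truncLp (N (φ j)) (f (φ j)))]
    nlinarith [norm_nonneg (T m (u (φ j))), norm_nonneg (T (N (φ j)) (u (φ j)))]
  have hlim : ∀ m, ‖T m c₀‖ ^ 2 ≤ M := by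
    intro m
    have hcont : Continuous fun c => ‖T m c‖ ^ 2 := (hTcont m).norm.pow 2
    apply le_of_tendsto (hcont.continuousAt.tendsto.comp hφtend)
    filter_upwards [Filter.eventually_ge_atTop m] with j hj
    exact hTmu m j (le_trans (le_trans hj (hφ.id_le j)) (hNge (φ j)))
  set g : ℕ → ℂ := F c₀ with hg
  have hgV : g ∈ V := hFmem c₀
  have hgl2 : Memℓp g 2 := by
    apply memℓp_of_trunc_bound (B := M)
    intro m
    have := hlim m
    rw [hTval] at this
    exact this
  have hcontra : ∀ j, ε < ‖T K (u (φ j)) - T K c₀‖ := by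
    intro j
    have h0 := hfg (φ j) ((((r (φ j)) : ℝ) : ℂ) • g) (Submodule.smul_mem V _ hgV)
      (hgl2.const_smul _)
    have heq : truncLp K (f (φ j) - (((r (φ j)) : ℝ) : ℂ) • g)
        = (((r (φ j)) : ℝ) : ℂ) • (T K (u (φ j)) - T K c₀) := by
      calc truncLp K (f (φ j) - (((r (φ j)) : ℝ) : ℂ) • g)
          = truncL K ((((r (φ j)) : ℝ) : ℂ) • (F (u (φ j)) - F c₀)) := by
            rw [truncL_apply]; congr 1
            rw [smul_sub]
            rw [hfu (φ j)]
        _ = (((r (φ j)) : ℝ) : ℂ) • (T K (u (φ j)) - T K c₀) := by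
            rw [map_smul, map_sub]; rfl
    have hnr : ‖(((r (φ j)) : ℝ) : ℂ)‖ = r (φ j) := by
      rw [Complex.norm_real, Real.norm_eq_abs, abs_of_pos (hr (φ j))]
    rw [heq, norm_smul, hnr] at h0
    have hrj := hr (φ j)
    have h0' : ε * r (φ j) < r (φ j) * ‖T K (u (φ j)) - T K c₀‖ := h0
    nlinarith
  have htend0 : Filter.Tendsto (fun j => ‖T K (u (φ j)) - T K c₀‖)
      Filter.atTop (nhds 0) := by
    have h1 : Filter.Tendsto (fun j => T K (u (φ j))) Filter.atTop (nhds (T K c₀)) :=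
      ((hTcont K).continuousAt.tendsto).comp hφtend
    have h2 := (h1.sub (tendsto_const_nhds (x := T K c₀))).norm
    simpa using h2
  obtain ⟨j, hj⟩ := (htend0.eventually (gt_mem_nhds hε)).exists
  exact lt_asymm (hcontra j) hj

/-- Let `V` be a finite-dimensional subspace of `ℂ^ℕ` and `K : ℕ` with
`Π_K f ≠ 0` for nonzero `f ∈ V`.  Let `Ω f = (Φ f f).re` be a continuous quadratic form
on `ℓ²(ℕ)` (given by a bounded sesquilinear form `Φ` with `Φ f f` real) satisfying
`Ω f ≥ ‖f‖²`.  Set `σ_{K,N}(f) = Ω(Π_N f) / ‖Π_K f‖²` and let `σmin K N` be its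
infimum (minimum) over nonzero `f ∈ V`.  Assume `V ∩ ℓ²(ℕ) ≠ {0}` and fix `c ≥ 1`.
Then the worst relative distance (measured in the norm `‖·‖_{ℓ²,K}`, in which the
orthogonal projection `P` onto `V ∩ ℓ²(ℕ)` attains the distance `‖P f - f‖_{ℓ²,K} =
min_{g ∈ V ∩ ℓ²} ‖Π_K (f - g)‖`) over `{f ∈ V \ {0} : σ_{K,N}(f) ≤ c·σmin}` tends to `0`
as `N → ∞`. -/
theorem stmt3
    (V : Submodule ℂ (ℕ → ℂ)) [FiniteDimensional ℂ V]
    (K : ℕ)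
    (hK : ∀ f ∈ V, f ≠ 0 → truncSeq K f ≠ 0)
    (Φ : lp (fun _ : ℕ => ℂ) 2 →L⋆[ℂ] lp (fun _ : ℕ => ℂ) 2 →L[ℂ] ℂ)
    (hreal : ∀ f : lp (fun _ : ℕ => ℂ) 2, (Φ f f).im = 0)
    (hlower : ∀ f : lp (fun _ : ℕ => ℂ) 2, ‖f‖ ^ 2 ≤ (Φ f f).re)
    (hV2 : ∃ f ∈ V, f ≠ 0 ∧ Memℓp f 2)
    (c : ℝ) (hc : 1 ≤ c) :
    ∀ ε > (0 : ℝ), ∃ N₀ : ℕ, ∀ N : ℕ, N₀ ≤ N →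
      ∀ f ∈ V, f ≠ 0 →
        (Φ (truncLp N f) (truncLp N f)).re / ‖truncLp K f‖ ^ 2 ≤
          c * sInf {r : ℝ | ∃ g ∈ V, g ≠ 0 ∧
            r = (Φ (truncLp N g) (truncLp N g)).re / ‖truncLp K g‖ ^ 2} →
        ∃ g ∈ V, Memℓp g 2 ∧ ‖truncLp K (f - g)‖ ≤ ε * ‖truncLp K f‖ := by
  intro ε hε
  obtain ⟨f₀, hf₀V, hf₀ne, hf₀l2⟩ := hV2
  set F₀ : lp (fun _ : ℕ => ℂ) 2 := ⟨f₀, hf₀l2⟩ with hF₀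
  have hK0 : 0 < ‖truncLp K f₀‖ := by
    rw [norm_pos_iff]
    intro h
    exact hK f₀ hf₀V hf₀ne (congrArg Subtype.val h)
  set C₀ : ℝ := ‖Φ‖ * ‖F₀‖ ^ 2 / ‖truncLp K f₀‖ ^ 2 with hC₀
  set M : ℝ := c * C₀ with hM
  obtain ⟨N₀, hN₀⟩ := key_lemma V K hK M hε
  refine ⟨N₀, fun N hN f hfV hfne hσ => ?_⟩
  have hfK : 0 < ‖truncLp K f‖ := by
    rw [norm_pos_iff]
    intro h
    exact hK f hfV hfne (congrArg Subtype.val h)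
  -- bound the value at f₀
  have hquad : ∀ x : lp (fun _ : ℕ => ℂ) 2, (Φ x x).re ≤ ‖Φ‖ * ‖x‖ ^ 2 := by
    intro x
    calc (Φ x x).re ≤ ‖Φ x x‖ := by
          exact Complex.re_le_norm _
      _ ≤ ‖Φ x‖ * ‖x‖ := (Φ x).le_opNorm x
      _ ≤ (‖Φ‖ * ‖x‖) * ‖x‖ := by
          have := Φ.le_opNorm x
          exact mul_le_mul_of_nonneg_right this (norm_nonneg x)
      _ = ‖Φ‖ * ‖x‖ ^ 2 := by ring
  have hσ0 : (Φ (truncLp N f₀) (truncLp N f₀)).re / ‖truncLp K f₀‖ ^ 2 ≤ C₀ := by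
    rw [hC₀]
    have hnum : (Φ (truncLp N f₀) (truncLp N f₀)).re ≤ ‖Φ‖ * ‖F₀‖ ^ 2 := by
      refine (hquad _).trans ?_
      have hle : ‖truncLp N f₀‖ ≤ ‖F₀‖ := norm_truncLp_le_of_memℓp N hf₀l2
      have h2 : ‖truncLp N f₀‖ ^ 2 ≤ ‖F₀‖ ^ 2 := by
        nlinarith [norm_nonneg (truncLp N f₀)]
      exact mul_le_mul_of_nonneg_left h2 (norm_nonneg Φ)
    gcongr
  -- the infimum is bounded below by 0 and at most the value at f₀
  set S : Set ℝ := {r : ℝ | ∃ g ∈ V, g ≠ 0 ∧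
      r = (Φ (truncLp N g) (truncLp N g)).re / ‖truncLp K g‖ ^ 2} with hS
  have hSbdd : BddBelow S := by
    refine ⟨0, fun x hx => ?_⟩
    obtain ⟨g, hgV, hgne, rfl⟩ := hx
    have h1 : (0:ℝ) ≤ (Φ (truncLp N g) (truncLp N g)).re :=
      le_trans (by positivity) (hlower (truncLp N g))
    positivity
  have hSmem : (Φ (truncLp N f₀) (truncLp N f₀)).re / ‖truncLp K f₀‖ ^ 2 ∈ S :=
    ⟨f₀, hf₀V, hf₀ne, rfl⟩
  have hsInf : sInf S ≤ C₀ := le_trans (csInf_le hSbdd hSmem) hσ0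
  have hc0 : (0:ℝ) < c := lt_of_lt_of_le one_pos hc
  have hσM : (Φ (truncLp N f) (truncLp N f)).re / ‖truncLp K f‖ ^ 2 ≤ M := by
    refine le_trans hσ ?_
    rw [hM]
    exact mul_le_mul_of_nonneg_left hsInf (le_of_lt hc0)
  have h2 : ‖truncLp N f‖ ^ 2 ≤ M * ‖truncLp K f‖ ^ 2 := by
    refine le_trans (hlower (truncLp N f)) ?_
    have hKsq : (0:ℝ) < ‖truncLp K f‖ ^ 2 := pow_pos hfK 2
    calc (Φ (truncLp N f) (truncLp N f)).re
        = ((Φ (truncLp N f) (truncLp N f)).re / ‖truncLp K f‖ ^ 2) *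
            ‖truncLp K f‖ ^ 2 := by field_simp
      _ ≤ M * ‖truncLp K f‖ ^ 2 :=
          mul_le_mul_of_nonneg_right hσM (le_of_lt hKsq)
  exact hN₀ N hN f hfV h2
end

section
/- For all integers k, m, n: the function ψ_{k,n} is square-integrable with respect to the measure (x² + 1)^k dx on ℝ; conj(ψ_{k,n}(x)) = ψ_{k, −n−k−1}(x) for every real x; and ∫_ℝ ψ_{k,m}(x) · conj(ψ_{k,n}(x)) · (x² + 1)^k dx = π if m = n and = 0 if m ≠ n. -/
open MeasureTheory Complex Filter Topology

/-- The wavepacket basis function `ψ_{k,n}(x) = (x+i)^{-(k+1)} ((x-i)/(x+i))^n`. -/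
noncomputable def psi (k n : ℤ) : ℝ → ℂ := fun x =>
  ((x : ℂ) + Complex.I) ^ (-(k + 1)) * (((x : ℂ) - Complex.I) / ((x : ℂ) + Complex.I)) ^ n

/-- The weighted measure `(x² + 1)^k dx` on `ℝ`. -/
noncomputable def wMeasure (k : ℤ) : Measure ℝ :=
  volume.withDensity fun x => ENNReal.ofReal ((x ^ 2 + 1) ^ k)

lemma add_I_ne (x : ℝ) : (x:ℂ) + Complex.I ≠ 0 := by
  intro h; have := congrArg Complex.im h; simp at this

lemma sub_I_ne (x : ℝ) : (x:ℂ) - Complex.I ≠ 0 := by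
  intro h; have := congrArg Complex.im h; simp at this

lemma mul_ab (x : ℝ) : ((x:ℂ) + Complex.I) * ((x:ℂ) - Complex.I) = (x:ℂ)^2 + 1 := by
  ring_nf
  rw [Complex.I_sq]
  ring

lemma w_ne (x : ℝ) : ((x:ℂ) - Complex.I) / ((x:ℂ) + Complex.I) ≠ 0 :=
  div_ne_zero (sub_I_ne x) (add_I_ne x)

lemma sq_ne (x : ℝ) : ((x:ℂ)^2 + 1) ≠ 0 := by
  rw [← mul_ab]; exact mul_ne_zero (add_I_ne x) (sub_I_ne x)

lemma norm_w (x : ℝ) : ‖((x:ℂ) - Complex.I) / ((x:ℂ) + Complex.I)‖ = 1 := by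
  have h : (x:ℂ) - Complex.I = (starRingEnd ℂ) ((x:ℂ) + Complex.I) := by
    simp [map_add, Complex.conj_ofReal, sub_eq_add_neg]
  rw [norm_div, h, RCLike.norm_conj, div_self (norm_ne_zero_iff.mpr (add_I_ne x))]

lemma norm_sq_add (x : ℝ) : ‖(x:ℂ) + Complex.I‖ ^ (2:ℕ) = x^2 + 1 := by
  rw [Complex.sq_norm]
  simp [Complex.normSq_apply]; ring

lemma cont_w : Continuous fun x : ℝ => ((x:ℂ) - Complex.I) / ((x:ℂ) + Complex.I) := by
  exact Continuous.div (by continuity) (by continuity) (fun x => add_I_ne x)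

lemma cont_g (j : ℤ) : Continuous fun x : ℝ =>
    (((x:ℂ) - Complex.I) / ((x:ℂ) + Complex.I)) ^ j * ((x:ℂ)^2 + 1)⁻¹ := by
  refine ((cont_w.zpow₀ j fun x => Or.inl (w_ne x)).mul (Continuous.inv₀ ?_ sq_ne))
  continuity

lemma norm_g (j : ℤ) (x : ℝ) :
    ‖(((x:ℂ) - Complex.I) / ((x:ℂ) + Complex.I)) ^ j * ((x:ℂ)^2 + 1)⁻¹‖ = (1 + x^2)⁻¹ := by
  rw [norm_mul, norm_zpow, norm_w, one_zpow, one_mul, norm_inv]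
  have h : ((x:ℂ)^2 + 1) = ((1 + x^2 : ℝ) : ℂ) := by push_cast; ring
  rw [h, Complex.norm_real, Real.norm_eq_abs, abs_of_pos (by positivity)]

lemma integrable_g (j : ℤ) : Integrable fun x : ℝ =>
    (((x:ℂ) - Complex.I) / ((x:ℂ) + Complex.I)) ^ j * ((x:ℂ)^2 + 1)⁻¹ := by
  refine Integrable.mono' integrable_inv_one_add_sq (cont_g j).aestronglyMeasurable
    (Filter.Eventually.of_forall fun x => le_of_eq (norm_g j x))

lemma tendsto_inv_add_I_top : Tendsto (fun x : ℝ => ((x:ℂ) + Complex.I)⁻¹) atTop (𝓝 0) := by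
  apply squeeze_zero_norm' (a := fun x : ℝ => x⁻¹)
  · filter_upwards [Filter.eventually_ge_atTop (1:ℝ)] with x hx
    rw [norm_inv]
    refine inv_anti₀ (by linarith) ?_
    calc x = |((x:ℂ) + Complex.I).re| := by simp [abs_of_pos (by linarith : (0:ℝ) < x)]
    _ ≤ ‖(x:ℂ) + Complex.I‖ := Complex.abs_re_le_norm _
  · exact tendsto_inv_atTop_zero

lemma tendsto_inv_add_I_bot : Tendsto (fun x : ℝ => ((x:ℂ) + Complex.I)⁻¹) atBot (𝓝 0) := by
  apply squeeze_zero_norm' (a := fun x : ℝ => (-x)⁻¹)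
  · filter_upwards [Filter.eventually_le_atBot (-1:ℝ)] with x hx
    rw [norm_inv]
    refine inv_anti₀ (by linarith) ?_
    calc -x = |((x:ℂ) + Complex.I).re| := by simp [abs_of_neg (by linarith : x < (0:ℝ))]
    _ ≤ ‖(x:ℂ) + Complex.I‖ := Complex.abs_re_le_norm _
  · exact tendsto_inv_atTop_zero.comp tendsto_neg_atBot_atTop

lemma zpow_shuffle (a b : ℂ) (ha : a ≠ 0) (hb : b ≠ 0) (k m n : ℤ) :
    a ^ (-(k+1)) * a ^ (-m : ℤ) * b ^ m * (a ^ n * b ^ (-n + -k + -1)) * (a ^ k * b ^ k) =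
    b ^ (m + -n) * (a ^ m * a ^ (-n : ℤ))⁻¹ * (a ^ (-1 : ℤ) * b ^ (-1 : ℤ)) := by
  simp only [mul_inv, ← zpow_neg]
  rw [show (-(k+1) : ℤ) = -1 + -k by ring, show (-n + -k + -1 : ℤ) = -1 + (-k + -n) by ring]
  simp only [zpow_add₀ ha, zpow_add₀ hb, zpow_neg, zpow_one]
  field_simp

lemma psi_eq (k n : ℤ) (x : ℝ) :
    psi k n x = ((x:ℂ) + Complex.I) ^ (-(k+1)-n) * ((x:ℂ) - Complex.I) ^ n := by
  have ha := add_I_ne x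
  simp only [psi, div_eq_mul_inv, mul_zpow, inv_zpow, ← zpow_neg, sub_eq_add_neg, zpow_add₀ ha]
  ring

lemma conj_psi (k n : ℤ) (x : ℝ) :
    (starRingEnd ℂ) (psi k n x) = psi k (-n - k - 1) x := by
  rw [psi_eq, psi_eq]
  have e1 : (-(k+1)-(-n-k-1) : ℤ) = n := by ring
  have e2 : (-n-k-1 : ℤ) = -(k+1)-n := by ring
  rw [e1, e2]
  simp only [map_mul, map_zpow₀, map_add, map_sub, Complex.conj_ofReal, Complex.conj_I,
    sub_neg_eq_add, ← sub_eq_add_neg]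
  ring

lemma integrand_eq (k m n : ℤ) (x : ℝ) :
    psi k m x * psi k (-n - k - 1) x * ((((x ^ 2 + 1) ^ k : ℝ)) : ℂ) =
      (((x:ℂ) - Complex.I) / ((x:ℂ) + Complex.I)) ^ (m - n) * (((x:ℂ)^2 + 1))⁻¹ := by
  have ha := add_I_ne x
  have hb := sub_I_ne x
  have hcast : ((((x ^ 2 + 1) ^ k : ℝ)) : ℂ)
      = ((x:ℂ) + Complex.I) ^ k * ((x:ℂ) - Complex.I) ^ k := by
    rw [← mul_zpow, mul_ab]
    push_cast
    ring
  have hinv : (((x:ℂ)^2 + 1))⁻¹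
      = ((x:ℂ) + Complex.I) ^ (-1 : ℤ) * ((x:ℂ) - Complex.I) ^ (-1 : ℤ) := by
    rw [← mul_zpow, ← mul_ab x, zpow_neg, zpow_one]
  rw [psi_eq, psi_eq, hcast, hinv]
  have e2 : (-(k+1)-(-n-k-1) : ℤ) = n := by ring
  rw [e2]
  simp only [div_eq_mul_inv, mul_zpow, inv_zpow, ← zpow_neg, zpow_add₀ ha, zpow_add₀ hb,
    sub_eq_add_neg, zpow_add₀ ha, zpow_add₀ hb]
  exact zpow_shuffle _ _ ha hb k m n

lemma tendsto_w_top : Tendsto (fun x : ℝ => ((x:ℂ) - Complex.I) / ((x:ℂ) + Complex.I))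
    atTop (𝓝 1) := by
  have h : (fun x : ℝ => ((x:ℂ) - Complex.I) / ((x:ℂ) + Complex.I))
      = fun x : ℝ => 1 - (2 * Complex.I) * ((x:ℂ) + Complex.I)⁻¹ := by
    funext x
    field_simp [add_I_ne x]
    ring
  rw [h]
  simpa using tendsto_const_nhds.sub (tendsto_inv_add_I_top.const_mul (2 * Complex.I))

lemma tendsto_w_bot : Tendsto (fun x : ℝ => ((x:ℂ) - Complex.I) / ((x:ℂ) + Complex.I))
    atBot (𝓝 1) := by
  have h : (fun x : ℝ => ((x:ℂ) - Complex.I) / ((x:ℂ) + Complex.I))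
      = fun x : ℝ => 1 - (2 * Complex.I) * ((x:ℂ) + Complex.I)⁻¹ := by
    funext x
    field_simp [add_I_ne x]
    ring
  rw [h]
  simpa using tendsto_const_nhds.sub (tendsto_inv_add_I_bot.const_mul (2 * Complex.I))

lemma integral_g_ne (j : ℤ) (hj : j ≠ 0) :
    (∫ x : ℝ, (((x:ℂ) - Complex.I) / ((x:ℂ) + Complex.I)) ^ j * ((x:ℂ)^2 + 1)⁻¹) = 0 := by
  set c : ℂ := (2 * Complex.I * j)⁻¹ with hc
  set w : ℝ → ℂ := fun x => ((x:ℂ) - Complex.I) / ((x:ℂ) + Complex.I) with hwdef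
  have hderiv : ∀ x : ℝ, HasDerivAt (fun y : ℝ => w y ^ j * c)
      (w x ^ j * ((x:ℂ)^2 + 1)⁻¹) x := by
    intro x
    have hx1 : HasDerivAt (fun y : ℝ => ((y:ℂ))) 1 x := by
      simpa using (hasDerivAt_id x).ofReal_comp
    have ha' : HasDerivAt (fun y : ℝ => (y:ℂ) + Complex.I) 1 x := hx1.add_const _
    have hb' : HasDerivAt (fun y : ℝ => (y:ℂ) - Complex.I) 1 x := hx1.sub_const _
    have hw : HasDerivAt w
        ((1 * ((x:ℂ) + Complex.I) - ((x:ℂ) - Complex.I) * 1) / ((x:ℂ) + Complex.I)^2) x :=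
      hb'.div ha' (add_I_ne x)
    have hpow : HasDerivAt (fun z : ℂ => z ^ j) ((j:ℂ) * w x ^ (j-1)) (w x) :=
      hasDerivAt_zpow j (w x) (Or.inl (w_ne x))
    have hcomp := (hpow.comp x hw).mul_const c
    refine hcomp.congr_deriv (Eq.symm ?_)
    have hjne : (j:ℂ) ≠ 0 := Int.cast_ne_zero.mpr hj
    have key : ∀ A B : ℂ, A ≠ 0 → B ≠ 0 → A - B = 2*Complex.I →
        (B/A)^j * (A*B)⁻¹
          = (j:ℂ) * (B/A) ^ (j-1) * ((1*A - B*1)/A^2) * (2*Complex.I*(j:ℂ))⁻¹ := by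
      intro A B hA hB hAB
      have h2I : (2 * Complex.I : ℂ) ≠ 0 := by simp [Complex.I_ne_zero]
      rw [zpow_sub_one₀ (div_ne_zero hB hA), show (1*A - B*1 : ℂ) = A - B by ring, hAB,
        inv_div,
        show (j:ℂ) * ((B/A)^j * (A/B)) * (2*Complex.I/A^2) * (2*Complex.I*(j:ℂ))⁻¹
            = ((B/A)^j * (A/B/A^2)) * (2*Complex.I*(j:ℂ) * (2*Complex.I*(j:ℂ))⁻¹)
          from by ring,
        mul_inv_cancel₀ (mul_ne_zero h2I hjne), mul_one]
      congr 1
      field_simp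
    rw [← mul_ab x]
    have := key ((x:ℂ)+Complex.I) ((x:ℂ)-Complex.I) (add_I_ne x) (sub_I_ne x) (by ring)
    simpa [hwdef, hc] using this
  have htop : Tendsto (fun y : ℝ => w y ^ j * c) atTop (𝓝 c) := by
    have := (tendsto_w_top.zpow₀ j (Or.inl one_ne_zero)).mul_const c
    simpa using this
  have hbot : Tendsto (fun y : ℝ => w y ^ j * c) atBot (𝓝 c) := by
    have := (tendsto_w_bot.zpow₀ j (Or.inl one_ne_zero)).mul_const c
    simpa using this
  have := integral_of_hasDerivAt_of_tendsto hderiv (integrable_g j) hbot htop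
  simpa using this

lemma integral_g_zero :
    (∫ x : ℝ, (((x:ℂ)^2 + 1))⁻¹) = (Real.pi : ℂ) := by
  have h : (fun x : ℝ => ((x:ℂ)^2 + 1)⁻¹) = fun x : ℝ => (((1 + x^2)⁻¹ : ℝ) : ℂ) := by
    funext x; push_cast; ring
  rw [h]
  rw [show (fun x : ℝ => (((1 + x^2)⁻¹ : ℝ) : ℂ)) = fun x : ℝ => ((RCLike.ofReal ((1 + x^2)⁻¹ : ℝ)) : ℂ) from rfl]
  rw [integral_ofReal, integral_univ_inv_one_add_sq]
  rfl

lemma cont_psi (k n : ℤ) : Continuous (psi k n) := by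
  unfold psi
  exact ((Continuous.zpow₀ (by continuity) _ (fun x => Or.inl (add_I_ne x))).mul
    (Continuous.zpow₀ (Continuous.div (by continuity) (by continuity) (fun x => add_I_ne x)) _
      (fun x => Or.inl (div_ne_zero (sub_I_ne x) (add_I_ne x)))))

lemma norm_psi_sq (k n : ℤ) (x : ℝ) :
    ‖psi k n x‖ ^ (2:ℕ) * ((x^2+1)^k) = (1 + x^2)⁻¹ := by
  have hpos : (0:ℝ) < x^2 + 1 := by positivity
  have hne : (x^2+1 : ℝ) ≠ 0 := ne_of_gt hpos
  rw [show psi k n x = ((x : ℂ) + Complex.I) ^ (-(k + 1)) *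
    (((x : ℂ) - Complex.I) / ((x : ℂ) + Complex.I)) ^ n from rfl]
  rw [norm_mul, norm_zpow, norm_zpow, norm_w, one_zpow, mul_one]
  rw [← zpow_natCast (‖(x:ℂ) + Complex.I‖ ^ (-(k+1))) 2, ← zpow_mul, mul_comm (-(k+1):ℤ) ((2:ℕ):ℤ),
    zpow_mul, zpow_natCast, norm_sq_add x]
  rw [← zpow_add₀ hne]
  rw [show (-(k+1)+k : ℤ) = -1 by ring, zpow_neg_one]
  rw [add_comm]

lemma memL2 (k n : ℤ) : MemLp (psi k n) 2 (wMeasure k) := by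
  have hmeasD : Measurable fun x : ℝ => ENNReal.ofReal ((x ^ 2 + 1) ^ k) := by
    apply ENNReal.measurable_ofReal.comp
    apply Continuous.measurable
    exact Continuous.zpow₀ (by continuity) _ (fun x => Or.inl (by positivity))
  have hmeas : AEStronglyMeasurable (psi k n) (wMeasure k) :=
    (cont_psi k n).aestronglyMeasurable
  rw [memLp_two_iff_integrable_sq_norm hmeas]
  unfold wMeasure
  rw [integrable_withDensity_iff hmeasD (Filter.Eventually.of_forall fun x =>
    ENNReal.ofReal_lt_top)]
  have heq : (fun x : ℝ => ‖psi k n x‖ ^ 2 * (ENNReal.ofReal ((x ^ 2 + 1) ^ k)).toReal)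
      = fun x : ℝ => (1 + x^2)⁻¹ := by
    funext x
    rw [ENNReal.toReal_ofReal (by positivity)]
    exact norm_psi_sq k n x
  rw [heq]
  exact integrable_inv_one_add_sq


/-- For all integers `k, m, n`: `ψ_{k,n}` is square-integrable with
respect to the measure `(x² + 1)^k dx` on `ℝ`; `conj (ψ_{k,n} x) = ψ_{k,-n-k-1} x`; and
`∫ ψ_{k,m} · conj ψ_{k,n} · (x² + 1)^k dx` equals `π` if `m = n` and `0` otherwise. -/
theorem stmt5 (k m n : ℤ) :
    MemLp (psi k n) 2 (wMeasure k) ∧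
    (∀ x : ℝ, (starRingEnd ℂ) (psi k n x) = psi k (-n - k - 1) x) ∧
    (∫ x : ℝ, psi k m x * (starRingEnd ℂ) (psi k n x) * ((((x ^ 2 + 1) ^ k : ℝ)) : ℂ)) =
      if m = n then (Real.pi : ℂ) else 0 := by
  refine ⟨memL2 k n, conj_psi k n, ?_⟩
  have key : (∫ x : ℝ, psi k m x * (starRingEnd ℂ) (psi k n x) * ((((x ^ 2 + 1) ^ k : ℝ)) : ℂ))
      = ∫ x : ℝ, (((x:ℂ) - Complex.I) / ((x:ℂ) + Complex.I)) ^ (m - n) * ((x:ℂ)^2 + 1)⁻¹ := by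
    congr 1
    funext x
    rw [conj_psi, integrand_eq]
  rw [key]
  by_cases h : m = n
  · subst h
    simp only [sub_self, zpow_zero, one_mul, if_pos]
    exact integral_g_zero
  · rw [if_neg h]
    exact integral_g_ne (m - n) (sub_ne_zero.mpr h)
end

section
/- Let k₀, j, m ∈ ℕ, let κ ∈ ℤ with κ ≤ k₀ + m − j, and set ℓ₁ = 2m + k₀ − κ. Then for every n ∈ ℕ: if n < ℓ₁, the function x ↦ x^j · (d/dx)^m e^{(k₀)}_n(x) is a linear combination of e^{(κ)}_0, e^{(κ)}_1, …, e^{(κ)}_{n+ℓ₁}; if n ≥ ℓ₁, it is a linear combination of e^{(κ)}_{n'} for n' ∈ { n−ℓ₁, n−ℓ₁+2, n−ℓ₁+4, …, n+ℓ₁ }, and in this combination the coefficient of e^{(κ)}_{n−ℓ₁} equals (i/2)^{k₀−κ−j+m} · (1/2)^j · (−1)^m · Π_{t=1}^{m} (ñ(k₀,n) + k₀ + t) when n + k₀ is even, and equals (−i/2)^{k₀−κ−j+m} · (1/2)^j · Π_{t=1}^{m} (ñ(k₀,n) − t + 1) when n + k₀ is odd. -/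
/-- The sorting index `ñ(k, n) = ⌊-(k+1)/2⌋ + (-1)^{n+k+1} ⌊(n+1)/2⌋`. -/
noncomputable def ntilde (k : ℤ) (n : ℕ) : ℤ :=
  ⌊(-(k : ℚ) - 1) / 2⌋ + (if Even ((n : ℤ) + k + 1) then 1 else -1) * ⌊((n : ℚ) + 1) / 2⌋

/-- The sorted basis function `e^{(k)}_n = π^{-1/2} ψ_{k, ñ(k,n)}`. -/
noncomputable def ebasis (k : ℤ) (n : ℕ) : ℝ → ℂ := fun x =>
  (((Real.sqrt Real.pi)⁻¹ : ℝ) : ℂ) * psi k (ntilde k n) x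

section Proofs
open Complex Finset
namespace S9

lemma add_I_ne (x : ℝ) : (x : ℂ) + I ≠ 0 := by
  intro h
  have := congrArg Complex.im h
  simp at this

lemma sub_I_ne (x : ℝ) : (x : ℂ) - I ≠ 0 := by
  intro h
  have := congrArg Complex.im h
  simp at this

lemma psi_alt (k ν : ℤ) (x : ℝ) :
    psi k ν x = ((x : ℂ) - I) ^ ν * ((x : ℂ) + I) ^ (-(k + 1 + ν)) := by
  unfold psi
  rw [div_zpow, div_eq_mul_inv, ← zpow_neg,
    show (-(k + 1 + ν)) = (-(k + 1)) + (-ν) by ring, zpow_add₀ (add_I_ne x)]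
  ring

lemma mul_add_I (k μ : ℤ) (x : ℝ) : ((x : ℂ) + I) * psi k μ x = psi (k - 1) μ x := by
  rw [psi_alt, psi_alt, show (-(k - 1 + 1 + μ)) = 1 + (-(k + 1 + μ)) by ring,
    zpow_add₀ (add_I_ne x), zpow_one]
  ring

lemma mul_sub_I (k μ : ℤ) (x : ℝ) : ((x : ℂ) - I) * psi k μ x = psi (k - 1) (μ + 1) x := by
  rw [psi_alt, psi_alt, show (-(k - 1 + 1 + (μ + 1))) = -(k + 1 + μ) by ring,
    zpow_add_one₀ (sub_I_ne x)]
  ring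

lemma x_mul_psi (k μ : ℤ) (x : ℝ) :
    (x : ℂ) * psi k μ x = (1 / 2 : ℂ) * psi (k - 1) μ x + (1 / 2 : ℂ) * psi (k - 1) (μ + 1) x := by
  rw [← mul_add_I k μ x, ← mul_sub_I k μ x]
  ring

lemma psi_split (k μ : ℤ) (x : ℝ) :
    psi k μ x = (-(I / 2)) * psi (k - 1) μ x + (I / 2) * psi (k - 1) (μ + 1) x := by
  rw [← mul_add_I k μ x, ← mul_sub_I k μ x]
  linear_combination psi k μ x * Complex.I_mul_I

lemma hasDerivAt_psi (k ν : ℤ) (x : ℝ) :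
    HasDerivAt (psi k ν)
      ((ν : ℂ) * psi (k + 1) (ν - 1) x - ((ν : ℂ) + k + 1) * psi (k + 1) ν x) x := by
  have hsub : HasDerivAt (fun z : ℂ => z - I) 1 (x : ℂ) := (hasDerivAt_id _).sub_const I
  have hadd : HasDerivAt (fun z : ℂ => z + I) 1 (x : ℂ) := (hasDerivAt_id _).add_const I
  have hA : HasDerivAt (fun z : ℂ => (z - I) ^ ν)
      ((ν : ℂ) * ((x : ℂ) - I) ^ (ν - 1) * 1) (x : ℂ) :=
    by have := (hasDerivAt_zpow ν ((x : ℂ) - I) (Or.inl (sub_I_ne x))).comp (x : ℂ) hsub; exact this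
  have hB : HasDerivAt (fun z : ℂ => (z + I) ^ (-(k + 1 + ν)))
      (((-(k + 1 + ν) : ℤ) : ℂ) * ((x : ℂ) + I) ^ (-(k + 1 + ν) - 1) * 1) (x : ℂ) :=
    by have := (hasDerivAt_zpow (-(k + 1 + ν)) ((x : ℂ) + I) (Or.inl (add_I_ne x))).comp (x : ℂ) hadd; exact this
  have hC := (hA.mul hB).comp_ofReal (z := x)
  have hfun : psi k ν = fun y : ℝ => ((y : ℂ) - I) ^ ν * ((y : ℂ) + I) ^ (-(k + 1 + ν)) :=
    funext (psi_alt k ν)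
  rw [hfun]
  convert hC using 1
  · rfl
  rw [psi_alt, psi_alt,
    show (-(k + 1 + 1 + (ν - 1))) = -(k + 1 + ν) by ring,
    show (-(k + 1 + 1 + ν)) = -(k + 1 + ν) - 1 by ring]
  push_cast
  ring
end S9
section B
open Complex Finset
namespace S9

lemma sum_shift (F : ℤ → ℂ) (lo hi : ℤ) :
    ∑ μ ∈ Icc lo hi, F μ = ∑ μ ∈ Icc (lo - 1) (hi - 1), F (μ + 1) := by
  have h : Icc lo hi = (Icc (lo - 1) (hi - 1)).image (fun μ => μ + 1) := by
    ext μ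
    simp only [Finset.mem_Icc, Finset.mem_image]
    constructor
    · intro h; exact ⟨μ - 1, by omega, by omega⟩
    · rintro ⟨b, hb, rfl⟩; omega
  rw [h, Finset.sum_image (by intro a _ b _ h; have h' : a + 1 = b + 1 := h; omega)]

lemma comb_mul (w : ℝ → ℂ) (α β : ℂ) (k : ℤ)
    (hw : ∀ (μ : ℤ) (x : ℝ), w x * psi k μ x = α * psi (k - 1) μ x + β * psi (k - 1) (μ + 1) x)
    (a : ℤ → ℂ) (lo hi : ℤ)
    (ha : ∀ μ ∉ Icc lo hi, a μ = 0)
    (g : ℝ → ℂ) (hg : ∀ x, g x = ∑ μ ∈ Icc lo hi, a μ * psi k μ x) :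
    ∃ a' : ℤ → ℂ, (∀ μ ∉ Icc lo (hi + 1), a' μ = 0) ∧
      (∀ x, w x * g x = ∑ μ ∈ Icc lo (hi + 1), a' μ * psi (k - 1) μ x) ∧
      a' lo = α * a lo ∧ a' (hi + 1) = β * a hi := by
  refine ⟨fun μ => α * a μ + β * a (μ - 1), ?_, ?_, ?_, ?_⟩
  · intro μ hμ
    rw [Finset.mem_Icc] at hμ
    dsimp only
    rw [ha μ (by rw [Finset.mem_Icc]; omega), ha (μ - 1) (by rw [Finset.mem_Icc]; omega)]
    ring
  · intro x
    have e1 : w x * g x = ∑ μ ∈ Icc lo hi,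
        (α * a μ * psi (k - 1) μ x + β * a μ * psi (k - 1) (μ + 1) x) := by
      rw [hg, Finset.mul_sum]
      refine Finset.sum_congr rfl fun μ _ => ?_
      have := hw μ x
      linear_combination a μ * this
    rw [e1, Finset.sum_add_distrib]
    have e2 : ∑ μ ∈ Icc lo hi, β * a μ * psi (k - 1) (μ + 1) x
        = ∑ μ ∈ Icc lo (hi + 1), β * a (μ - 1) * psi (k - 1) μ x := by
      rw [sum_shift (fun μ => β * a (μ - 1) * psi (k - 1) μ x) lo (hi + 1)]
      simp only [add_sub_cancel_right]
      refine Finset.sum_subset (Finset.Icc_subset_Icc_left (by omega)) fun μ _ hμ' => ?_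
      rw [ha μ hμ']
      ring
    have e3 : ∑ μ ∈ Icc lo hi, α * a μ * psi (k - 1) μ x
        = ∑ μ ∈ Icc lo (hi + 1), α * a μ * psi (k - 1) μ x := by
      refine Finset.sum_subset (Finset.Icc_subset_Icc_right (by omega)) ?_
      intro μ _ hμ
      rw [ha μ hμ]; ring
    rw [e2, e3, ← Finset.sum_add_distrib]
    refine Finset.sum_congr rfl fun μ _ => ?_
    ring
  · dsimp only
    rw [ha (lo - 1) (by rw [Finset.mem_Icc]; omega)]; ring
  · dsimp only
    rw [ha (hi + 1) (by rw [Finset.mem_Icc]; omega)]; ring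

lemma comb_deriv (k : ℤ) (a : ℤ → ℂ) (lo hi : ℤ)
    (ha : ∀ μ ∉ Icc lo hi, a μ = 0)
    (g : ℝ → ℂ) (hg : g = fun x => ∑ μ ∈ Icc lo hi, a μ * psi k μ x) :
    ∃ a' : ℤ → ℂ, (∀ μ ∉ Icc (lo - 1) hi, a' μ = 0) ∧
      (deriv g = fun x => ∑ μ ∈ Icc (lo - 1) hi, a' μ * psi (k + 1) μ x) ∧
      a' (lo - 1) = (lo : ℂ) * a lo ∧ a' hi = -((hi : ℂ) + k + 1) * a hi := by
  refine ⟨fun μ => ((μ : ℂ) + 1) * a (μ + 1) - ((μ : ℂ) + k + 1) * a μ, ?_, ?_, ?_, ?_⟩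
  rotate_right 2
  · dsimp only
    rw [ha (lo - 1) (by rw [Finset.mem_Icc]; omega)]
    push_cast; ring
  · dsimp only
    rw [ha (hi + 1) (by rw [Finset.mem_Icc]; omega)]
    push_cast; ring
  · intro μ hμ
    rw [Finset.mem_Icc] at hμ
    dsimp only
    rw [ha μ (by rw [Finset.mem_Icc]; omega), ha (μ + 1) (by rw [Finset.mem_Icc]; omega)]
    ring
  · funext x
    have hd : HasDerivAt g (∑ μ ∈ Icc lo hi,
        a μ * ((μ : ℂ) * psi (k + 1) (μ - 1) x - ((μ : ℂ) + k + 1) * psi (k + 1) μ x)) x := by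
      rw [hg]
      exact HasDerivAt.fun_sum fun μ _ => (hasDerivAt_psi k μ x).const_mul (a μ)
    rw [hd.deriv]
    have e0 : ∑ μ ∈ Icc lo hi,
        a μ * ((μ : ℂ) * psi (k + 1) (μ - 1) x - ((μ : ℂ) + k + 1) * psi (k + 1) μ x)
        = (∑ μ ∈ Icc lo hi, (μ : ℂ) * a μ * psi (k + 1) (μ - 1) x)
          - ∑ μ ∈ Icc lo hi, ((μ : ℂ) + k + 1) * a μ * psi (k + 1) μ x := by
      rw [← Finset.sum_sub_distrib]
      exact Finset.sum_congr rfl fun μ _ => by ring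
    have e1 : ∑ μ ∈ Icc lo hi, (μ : ℂ) * a μ * psi (k + 1) (μ - 1) x
        = ∑ μ ∈ Icc (lo - 1) (hi - 1), ((μ : ℂ) + 1) * a (μ + 1) * psi (k + 1) μ x := by
      rw [sum_shift (fun μ => (μ : ℂ) * a μ * psi (k + 1) (μ - 1) x) lo hi]
      refine Finset.sum_congr rfl fun μ _ => ?_
      push_cast
      ring_nf
    have e2 : ∑ μ ∈ Icc (lo - 1) (hi - 1), ((μ : ℂ) + 1) * a (μ + 1) * psi (k + 1) μ x
        = ∑ μ ∈ Icc (lo - 1) hi, ((μ : ℂ) + 1) * a (μ + 1) * psi (k + 1) μ x := by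
      refine Finset.sum_subset (Finset.Icc_subset_Icc_right (by omega)) ?_
      intro μ hμ hμ'
      rw [Finset.mem_Icc] at hμ hμ'
      rw [ha (μ + 1) (by rw [Finset.mem_Icc]; omega)]
      ring
    have e3 : ∑ μ ∈ Icc lo hi, ((μ : ℂ) + k + 1) * a μ * psi (k + 1) μ x
        = ∑ μ ∈ Icc (lo - 1) hi, ((μ : ℂ) + k + 1) * a μ * psi (k + 1) μ x := by
      refine Finset.sum_subset (Finset.Icc_subset_Icc_left (by omega)) ?_
      intro μ _ hμ
      rw [ha μ hμ]; ring
    rw [e0, e1, e2, e3, ← Finset.sum_sub_distrib]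
    exact Finset.sum_congr rfl fun μ _ => by ring

end S9
end B
section C
open Complex Finset
namespace S9

lemma comb_iter_deriv (C : ℂ) (k ν : ℤ) (m : ℕ) :
    ∃ a : ℤ → ℂ, (∀ μ ∉ Icc (ν - m) ν, a μ = 0) ∧
      (deriv^[m] (fun x : ℝ => C * psi k ν x)
        = fun x => ∑ μ ∈ Icc (ν - m) ν, a μ * psi (k + m) μ x) ∧
      a (ν - m) = C * ∏ t ∈ Icc 1 m, ((ν : ℂ) - t + 1) ∧
      a ν = C * (-1 : ℂ) ^ m * ∏ t ∈ Icc 1 m, ((ν : ℂ) + k + t) := by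
  induction m with
  | zero =>
    refine ⟨fun μ => if μ = ν then C else 0, ?_, ?_, ?_, ?_⟩
    · intro μ hμ
      rw [Finset.mem_Icc] at hμ
      dsimp only
      rw [if_neg (by push_cast at hμ; omega)]
    · funext x
      simp
    · simp
    · simp
  | succ m ih =>
    obtain ⟨a, ha, hsum, hlo, hhi⟩ := ih
    obtain ⟨a', ha', hsum', hlo', hhi'⟩ := comb_deriv (k + m) a (ν - m) ν ha _ hsum
    have hcast : (ν - (m + 1 : ℕ) : ℤ) = ν - m - 1 := by push_cast; ring
    have hcast2 : (k + (m + 1 : ℕ) : ℤ) = k + m + 1 := by push_cast; ring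
    refine ⟨a', ?_, ?_, ?_, ?_⟩
    · rw [hcast]; exact ha'
    · rw [Function.iterate_succ_apply', hsum', hcast, hcast2]
    · rw [hcast, hlo', hlo, Finset.prod_Icc_succ_top (Nat.le_add_left 1 m)]
      push_cast
      ring
    · rw [hhi', hhi, Finset.prod_Icc_succ_top (Nat.le_add_left 1 m)]
      push_cast
      ring

lemma comb_xpow (j : ℕ) (k : ℤ) (a : ℤ → ℂ) (lo hi : ℤ)
    (ha : ∀ μ ∉ Icc lo hi, a μ = 0)
    (g : ℝ → ℂ) (hg : ∀ x, g x = ∑ μ ∈ Icc lo hi, a μ * psi k μ x) :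
    ∃ a' : ℤ → ℂ, (∀ μ ∉ Icc lo (hi + j), a' μ = 0) ∧
      (∀ x : ℝ, (x : ℂ) ^ j * g x = ∑ μ ∈ Icc lo (hi + j), a' μ * psi (k - j) μ x) ∧
      a' lo = (1 / 2 : ℂ) ^ j * a lo ∧ a' (hi + j) = (1 / 2 : ℂ) ^ j * a hi := by
  induction j with
  | zero =>
    refine ⟨a, by simpa using ha, fun x => by simpa using hg x, by simp, by simp⟩
  | succ j ih =>
    obtain ⟨a1, ha1, hsum1, hlo1, hhi1⟩ := ih
    obtain ⟨a2, ha2, hsum2, hlo2, hhi2⟩ := comb_mul (fun x : ℝ => (x : ℂ)) (1 / 2 : ℂ)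
      (1 / 2 : ℂ) (k - j) (fun μ x => x_mul_psi (k - j) μ x) a1 lo (hi + j) ha1 _ hsum1
    have hc1 : (hi + (j + 1 : ℕ) : ℤ) = hi + j + 1 := by push_cast; ring
    have hc2 : (k - (j + 1 : ℕ) : ℤ) = k - j - 1 := by push_cast; ring
    refine ⟨a2, by rw [hc1]; exact ha2, fun x => ?_, ?_, ?_⟩
    · rw [hc1, hc2, ← hsum2 x, pow_succ]
      ring
    · rw [hlo2, hlo1, pow_succ]; ring
    · rw [hc1, hhi2, hhi1, pow_succ]; ring

lemma comb_low (r : ℕ) (k : ℤ) (a : ℤ → ℂ) (lo hi : ℤ)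
    (ha : ∀ μ ∉ Icc lo hi, a μ = 0)
    (g : ℝ → ℂ) (hg : ∀ x, g x = ∑ μ ∈ Icc lo hi, a μ * psi k μ x) :
    ∃ a' : ℤ → ℂ, (∀ μ ∉ Icc lo (hi + r), a' μ = 0) ∧
      (∀ x : ℝ, g x = ∑ μ ∈ Icc lo (hi + r), a' μ * psi (k - r) μ x) ∧
      a' lo = (-(I / 2)) ^ r * a lo ∧ a' (hi + r) = (I / 2) ^ r * a hi := by
  induction r with
  | zero =>
    refine ⟨a, by simpa using ha, fun x => by simpa using hg x, by simp, by simp⟩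
  | succ r ih =>
    obtain ⟨a1, ha1, hsum1, hlo1, hhi1⟩ := ih
    obtain ⟨a2, ha2, hsum2, hlo2, hhi2⟩ := comb_mul (fun _ : ℝ => (1 : ℂ)) (-(I / 2))
      (I / 2) (k - r) (fun μ x => by rw [one_mul]; exact psi_split (k - r) μ x)
      a1 lo (hi + r) ha1 _ hsum1
    have hc1 : (hi + (r + 1 : ℕ) : ℤ) = hi + r + 1 := by push_cast; ring
    have hc2 : (k - (r + 1 : ℕ) : ℤ) = k - r - 1 := by push_cast; ring
    refine ⟨a2, by rw [hc1]; exact ha2, fun x => ?_, ?_, ?_⟩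
    · rw [hc1, hc2, ← hsum2 x, one_mul]
    · rw [hlo2, hlo1, pow_succ]; ring
    · rw [hc1, hhi2, hhi1, pow_succ]; ring

end S9
end C
section D
open Complex Finset
namespace S9

lemma master (C : ℂ) (k₀ j m : ℕ) (κ : ℤ) (hκ : κ ≤ (k₀ : ℤ) + m - j) (ν : ℤ) :
    ∃ a : ℤ → ℂ,
      (∀ μ ∉ Icc (ν - m) (ν + ((k₀ : ℤ) + m - κ)), a μ = 0) ∧
      (∀ x : ℝ, (x : ℂ) ^ j * deriv^[m] (fun x : ℝ => C * psi k₀ ν x) x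
          = ∑ μ ∈ Icc (ν - m) (ν + ((k₀ : ℤ) + m - κ)), a μ * psi κ μ x) ∧
      a (ν - m) = C * (-(I / 2)) ^ ((k₀ : ℤ) - κ - j + m) * (1 / 2 : ℂ) ^ j *
        ∏ t ∈ Icc 1 m, ((ν : ℂ) - t + 1) ∧
      a (ν + ((k₀ : ℤ) + m - κ)) = C * (I / 2) ^ ((k₀ : ℤ) - κ - j + m) * (1 / 2 : ℂ) ^ j *
        (-1 : ℂ) ^ m * ∏ t ∈ Icc 1 m, ((ν : ℂ) + k₀ + t) := by
  set p : ℕ := ((k₀ : ℤ) + m - j - κ).toNat with hp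
  have hpz : ((p : ℤ)) = (k₀ : ℤ) + m - j - κ := Int.toNat_of_nonneg (by omega)
  obtain ⟨a1, ha1, hsum1, hlo1, hhi1⟩ := comb_iter_deriv C k₀ ν m
  obtain ⟨a2, ha2, hsum2, hlo2, hhi2⟩ := comb_xpow j ((k₀ : ℤ) + m) a1 (ν - m) ν ha1 _
    (fun x => congrFun hsum1 x)
  obtain ⟨a3, ha3, hsum3, hlo3, hhi3⟩ := comb_low p ((k₀ : ℤ) + m - j) a2 (ν - m) (ν + j) ha2 _
    hsum2
  have hk : ((k₀ : ℤ) + m - j - p) = κ := by omega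
  have hhi : (ν + (j : ℤ) + p) = ν + ((k₀ : ℤ) + m - κ) := by omega
  have hzpow1 : (-(I / 2)) ^ ((k₀ : ℤ) - κ - j + m) = (-(I / 2)) ^ p := by
    rw [show ((k₀ : ℤ) - κ - j + m) = (p : ℤ) by omega, zpow_natCast]
  have hzpow2 : (I / 2) ^ ((k₀ : ℤ) - κ - j + m) = (I / 2 : ℂ) ^ p := by
    rw [show ((k₀ : ℤ) - κ - j + m) = (p : ℤ) by omega, zpow_natCast]
  refine ⟨a3, ?_, ?_, ?_, ?_⟩
  · rw [← hhi]; exact ha3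
  · intro x
    rw [← hhi, ← hk, ← hsum3 x, hsum2 x]
  · rw [hlo3, hlo2, hlo1, hzpow1]; ring
  · rw [← hhi, hhi3, hhi2, hhi1, hzpow2]; push_cast; ring

end S9
end D
section E
open Complex Finset
namespace S9

lemma floor_half_spec (a : ℤ) :
    2 * ⌊((a : ℚ)) / 2⌋ ≤ a ∧ a < 2 * ⌊((a : ℚ)) / 2⌋ + 2 := by
  constructor
  · have h := Int.floor_le ((a : ℚ) / 2)
    have h2 : (2 * ⌊(a : ℚ) / 2⌋ : ℚ) ≤ (a : ℚ) := by push_cast; linarith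
    exact_mod_cast h2
  · have h := Int.lt_floor_add_one ((a : ℚ) / 2)
    have h2 : (a : ℚ) < (2 * ⌊(a : ℚ) / 2⌋ + 2 : ℚ) := by push_cast; linarith
    exact_mod_cast h2

lemma ntilde_eq (k : ℤ) (n : ℕ) :
    2 * ntilde k n = if Even ((n : ℤ) + k) then -k - 2 - (n : ℤ) else (n : ℤ) - k - 1 := by
  unfold ntilde
  have h1 := floor_half_spec (-k - 1)
  have h2 := floor_half_spec ((n : ℤ) + 1)
  rw [show ((-k - 1 : ℤ) : ℚ) = -(k : ℚ) - 1 by push_cast; ring] at h1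
  rw [show (((n : ℤ) + 1 : ℤ) : ℚ) = (n : ℚ) + 1 by push_cast; ring] at h2
  by_cases hp : Even ((n : ℤ) + k + 1)
  · have hp' : ¬ Even ((n : ℤ) + k) := by
      rw [Int.even_iff] at hp ⊢; omega
    rw [if_pos hp, if_neg hp']
    rw [Int.even_iff] at hp
    omega
  · have hp' : Even ((n : ℤ) + k) := by
      rw [Int.even_iff] at hp ⊢; omega
    rw [if_neg hp, if_pos hp']
    rw [Int.even_iff] at hp
    omega

lemma ntilde_inj (k : ℤ) {n1 n2 : ℕ} (h : ntilde k n1 = ntilde k n2) : n1 = n2 := by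
  have h1 := ntilde_eq k n1
  have h2 := ntilde_eq k n2
  split_ifs at h1 h2 <;> omega

lemma ntilde_inv (k μ : ℤ) :
    ∃ n : ℕ, ntilde k n = μ ∧ ((n : ℤ) = 2 * μ + k + 1 ∨ (n : ℤ) = -k - 2 - 2 * μ) := by
  rcases le_or_gt 0 (2 * μ + k + 1) with h | h
  · refine ⟨(2 * μ + k + 1).toNat, ?_, Or.inl (Int.toNat_of_nonneg h)⟩
    have hc : (((2 * μ + k + 1).toNat : ℤ)) = 2 * μ + k + 1 := Int.toNat_of_nonneg h
    have h2 := ntilde_eq k (2 * μ + k + 1).toNat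
    rw [hc, if_neg (by rw [Int.even_iff]; omega)] at h2
    omega
  · refine ⟨(-k - 2 - 2 * μ).toNat, ?_, Or.inr (Int.toNat_of_nonneg (by omega))⟩
    have hc : (((-k - 2 - 2 * μ).toNat : ℤ)) = -k - 2 - 2 * μ := Int.toNat_of_nonneg (by omega)
    have h2 := ntilde_eq k (-k - 2 - 2 * μ).toNat
    rw [hc, if_pos (by rw [Int.even_iff]; omega)] at h2
    omega

end S9
end E
section F
open Complex Finset
namespace S9

lemma sum_range_desc (G : ℤ → ℂ) (N : ℕ) (hi : ℤ) :
    ∑ s ∈ range (N + 1), G (hi - s) = ∑ μ ∈ Icc (hi - N) hi, G μ := by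
  have h : Icc (hi - N) hi = (range (N + 1)).image (fun s : ℕ => hi - s) := by
    ext μ
    simp only [Finset.mem_Icc, Finset.mem_image, Finset.mem_range]
    constructor
    · intro hμ; exact ⟨(hi - μ).toNat, by omega, by omega⟩
    · rintro ⟨s, hs, rfl⟩; omega
  rw [h, Finset.sum_image (by intro x1 _ x2 _ hx; have hx' : hi - (x1 : ℤ) = hi - (x2 : ℤ) := hx; omega)]

lemma sum_range_asc (G : ℤ → ℂ) (N : ℕ) (lo : ℤ) :
    ∑ s ∈ range (N + 1), G (lo + s) = ∑ μ ∈ Icc lo (lo + N), G μ := by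
  have h : Icc lo (lo + N) = (range (N + 1)).image (fun s : ℕ => lo + s) := by
    ext μ
    simp only [Finset.mem_Icc, Finset.mem_image, Finset.mem_range]
    constructor
    · intro hμ; exact ⟨(μ - lo).toNat, by omega, by omega⟩
    · rintro ⟨s, hs, rfl⟩; omega
  rw [h, Finset.sum_image (by intro x1 _ x2 _ hx; have hx' : lo + (x1 : ℤ) = lo + (x2 : ℤ) := hx; omega)]

end S9
end F

open S9

/-- Let `k₀, j, m ∈ ℕ`, `κ ∈ ℤ` with `κ ≤ k₀ + m - j`, and set
`ℓ₁ = 2m + k₀ - κ` (a nonnegative integer).  For every `n ∈ ℕ`: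
if `n < ℓ₁` then `x^j (d/dx)^m e^{(k₀)}_n` is a linear combination of
`e^{(κ)}_0, …, e^{(κ)}_{n+ℓ₁}`; if `n ≥ ℓ₁` it is a linear combination of
`e^{(κ)}_{n-ℓ₁+2s}` for `s = 0, …, ℓ₁`, whose coefficient of `e^{(κ)}_{n-ℓ₁}` is
`(i/2)^{k₀-κ-j+m} (1/2)^j (-1)^m Π_{t=1}^m (ñ(k₀,n) + k₀ + t)` when `n + k₀` is even,
and `(-i/2)^{k₀-κ-j+m} (1/2)^j Π_{t=1}^m (ñ(k₀,n) - t + 1)` when `n + k₀` is odd. -/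
theorem stmt9 (k₀ j m : ℕ) (κ : ℤ) (hκ : κ ≤ (k₀ : ℤ) + (m : ℤ) - (j : ℤ)) (n : ℕ) :
    ((n : ℤ) < 2 * (m : ℤ) + (k₀ : ℤ) - κ →
      ∃ c : ℕ → ℂ, ∀ x : ℝ, ((x : ℂ)) ^ j * deriv^[m] (ebasis (k₀ : ℤ) n) x =
        ∑ n' ∈ Finset.range (((n : ℤ) + (2 * (m : ℤ) + (k₀ : ℤ) - κ)).toNat + 1),
          c n' * ebasis κ n' x) ∧
    (2 * (m : ℤ) + (k₀ : ℤ) - κ ≤ (n : ℤ) →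
      ∃ c : ℕ → ℂ,
        (∀ x : ℝ, ((x : ℂ)) ^ j * deriv^[m] (ebasis (k₀ : ℤ) n) x =
          ∑ s ∈ Finset.range ((2 * (m : ℤ) + (k₀ : ℤ) - κ).toNat + 1),
            c s * ebasis κ (((n : ℤ) - (2 * (m : ℤ) + (k₀ : ℤ) - κ)).toNat + 2 * s) x) ∧
        (Even ((n : ℤ) + (k₀ : ℤ)) →
          c 0 = (Complex.I / 2) ^ ((k₀ : ℤ) - κ - (j : ℤ) + (m : ℤ)) * ((1 : ℂ) / 2) ^ j *
            (-1 : ℂ) ^ m *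
            ∏ t ∈ Finset.Icc 1 m, ((ntilde (k₀ : ℤ) n : ℂ) + (k₀ : ℂ) + (t : ℂ))) ∧
        (¬ Even ((n : ℤ) + (k₀ : ℤ)) →
          c 0 = (-(Complex.I / 2)) ^ ((k₀ : ℤ) - κ - (j : ℤ) + (m : ℤ)) * ((1 : ℂ) / 2) ^ j *
            ∏ t ∈ Finset.Icc 1 m, ((ntilde (k₀ : ℤ) n : ℂ) - (t : ℂ) + 1))) := by
  set C : ℂ := (((Real.sqrt Real.pi)⁻¹ : ℝ) : ℂ) with hC_def
  have hC : C ≠ 0 := by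
    rw [hC_def]
    exact Complex.ofReal_ne_zero.mpr (inv_ne_zero (Real.sqrt_ne_zero'.mpr Real.pi_pos))
  set ν : ℤ := ntilde (k₀ : ℤ) n with hν_def
  obtain ⟨a, ha, hsum, hlo, hhi⟩ := master C k₀ j m κ hκ ν
  have heb : ebasis (k₀ : ℤ) n = fun x : ℝ => C * psi (k₀ : ℤ) ν x := rfl
  have hterm : ∀ (q : ℕ) (x : ℝ),
      a (ntilde κ q) / C * ebasis κ q x = a (ntilde κ q) * psi κ (ntilde κ q) x := by
    intro q x
    show a (ntilde κ q) / C * (C * psi κ (ntilde κ q) x) = _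
    field_simp
  have hν2 : 2 * ν = -(k₀ : ℤ) - 2 - n ∨ 2 * ν = (n : ℤ) - k₀ - 1 := by
    have h := ntilde_eq (k₀ : ℤ) n
    rw [← hν_def] at h
    split_ifs at h
    · exact Or.inl h
    · exact Or.inr h
  constructor
  · -- Part 1
    intro h1
    refine ⟨fun n' => a (ntilde κ n') / C, fun x => ?_⟩
    rw [heb, hsum x]
    have hsub : Icc (ν - (m : ℤ)) (ν + ((k₀ : ℤ) + m - κ)) ⊆
        (Finset.range (((n : ℤ) + (2 * (m : ℤ) + (k₀ : ℤ) - κ)).toNat + 1)).image (ntilde κ) := by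
      intro μ hμ
      rw [Finset.mem_Icc] at hμ
      obtain ⟨q, hq, hq2⟩ := ntilde_inv κ μ
      rw [Finset.mem_image]
      exact ⟨q, Finset.mem_range.mpr (by omega), hq⟩
    calc ∑ μ ∈ Icc (ν - (m : ℤ)) (ν + ((k₀ : ℤ) + m - κ)), a μ * psi κ μ x
        = ∑ μ ∈ (Finset.range (((n : ℤ) + (2 * (m : ℤ) + (k₀ : ℤ) - κ)).toNat + 1)).image
            (ntilde κ), a μ * psi κ μ x :=
          Finset.sum_subset hsub (fun μ _ hμ => by rw [ha μ hμ]; ring)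
      _ = ∑ n' ∈ Finset.range (((n : ℤ) + (2 * (m : ℤ) + (k₀ : ℤ) - κ)).toNat + 1),
            a (ntilde κ n') * psi κ (ntilde κ n') x :=
          Finset.sum_image (fun x1 _ x2 _ hx => ntilde_inj κ hx)
      _ = ∑ n' ∈ Finset.range (((n : ℤ) + (2 * (m : ℤ) + (k₀ : ℤ) - κ)).toNat + 1),
            a (ntilde κ n') / C * ebasis κ n' x :=
          Finset.sum_congr rfl (fun q _ => (hterm q x).symm)
  · -- Part 2
    intro h2
    set b : ℕ := ((n : ℤ) - (2 * (m : ℤ) + (k₀ : ℤ) - κ)).toNat with hb_def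
    have hb : (b : ℤ) = (n : ℤ) - (2 * (m : ℤ) + (k₀ : ℤ) - κ) := Int.toNat_of_nonneg (by omega)
    set N : ℕ := (2 * (m : ℤ) + (k₀ : ℤ) - κ).toNat with hN_def
    have hN : (N : ℤ) = 2 * (m : ℤ) + (k₀ : ℤ) - κ := Int.toNat_of_nonneg (by omega)
    refine ⟨fun s => a (ntilde κ (b + 2 * s)) / C, ?_, ?_, ?_⟩
    · -- sum identity
      intro x
      rw [heb, hsum x]
      by_cases hpar : Even ((n : ℤ) + (k₀ : ℤ))
      · -- even case: ntilde κ (b + 2s) = hi - s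
        have hν' : 2 * ν = -(k₀ : ℤ) - 2 - n := by
          rcases hν2 with h | h
          · exact h
          · exfalso; rw [Int.even_iff] at hpar; omega
        have hφ : ∀ s : ℕ, ntilde κ (b + 2 * s) = (ν + ((k₀ : ℤ) + m - κ)) - s := by
          intro s
          have h := ntilde_eq κ (b + 2 * s)
          rw [if_pos (by rw [Int.even_iff] at hpar ⊢; push_cast; omega)] at h
          push_cast at h
          rw [Int.even_iff] at hpar
          omega
        calc ∑ μ ∈ Icc (ν - (m : ℤ)) (ν + ((k₀ : ℤ) + m - κ)), a μ * psi κ μ x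
            = ∑ μ ∈ Icc ((ν + ((k₀ : ℤ) + m - κ)) - N) (ν + ((k₀ : ℤ) + m - κ)),
                a μ * psi κ μ x := by
              rw [show (ν + ((k₀ : ℤ) + m - κ)) - N = ν - (m : ℤ) by omega]
          _ = ∑ s ∈ range (N + 1), a ((ν + ((k₀ : ℤ) + m - κ)) - s) *
                psi κ ((ν + ((k₀ : ℤ) + m - κ)) - s) x :=
              (sum_range_desc (fun μ => a μ * psi κ μ x) N _).symm
          _ = ∑ s ∈ range (N + 1), a (ntilde κ (b + 2 * s)) / C * ebasis κ (b + 2 * s) x := by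
              refine Finset.sum_congr rfl (fun s _ => ?_)
              rw [← hφ s, hterm (b + 2 * s) x]
      · -- odd case: ntilde κ (b + 2s) = lo + s
        have hν' : 2 * ν = (n : ℤ) - k₀ - 1 := by
          rcases hν2 with h | h
          · exfalso; rw [Int.even_iff] at hpar; omega
          · exact h
        have hφ : ∀ s : ℕ, ntilde κ (b + 2 * s) = (ν - (m : ℤ)) + s := by
          intro s
          have h := ntilde_eq κ (b + 2 * s)
          rw [if_neg (by rw [Int.even_iff] at hpar ⊢; push_cast; omega)] at h
          push_cast at h
          rw [Int.even_iff] at hpar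
          omega
        calc ∑ μ ∈ Icc (ν - (m : ℤ)) (ν + ((k₀ : ℤ) + m - κ)), a μ * psi κ μ x
            = ∑ μ ∈ Icc (ν - (m : ℤ)) ((ν - (m : ℤ)) + N), a μ * psi κ μ x := by
              rw [show (ν - (m : ℤ)) + N = ν + ((k₀ : ℤ) + m - κ) by omega]
          _ = ∑ s ∈ range (N + 1), a ((ν - (m : ℤ)) + s) * psi κ ((ν - (m : ℤ)) + s) x :=
              (sum_range_asc (fun μ => a μ * psi κ μ x) N _).symm
          _ = ∑ s ∈ range (N + 1), a (ntilde κ (b + 2 * s)) / C * ebasis κ (b + 2 * s) x := by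
              refine Finset.sum_congr rfl (fun s _ => ?_)
              rw [← hφ s, hterm (b + 2 * s) x]
    · -- even coefficient
      intro hpar
      have hν' : 2 * ν = -(k₀ : ℤ) - 2 - n := by
        rcases hν2 with h | h
        · exact h
        · exfalso; rw [Int.even_iff] at hpar; omega
      have hφ0 : ntilde κ b = ν + ((k₀ : ℤ) + m - κ) := by
        have h := ntilde_eq κ b
        rw [if_pos (by rw [Int.even_iff] at hpar ⊢; push_cast; omega)] at h
        push_cast at h
        rw [Int.even_iff] at hpar
        omega
      show a (ntilde κ (b + 2 * 0)) / C = _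
      rw [show b + 2 * 0 = b by omega, hφ0, hhi, mul_assoc, mul_assoc, mul_assoc, mul_div_cancel_left₀ _ hC]
      ring
    · -- odd coefficient
      intro hpar
      have hν' : 2 * ν = (n : ℤ) - k₀ - 1 := by
        rcases hν2 with h | h
        · exfalso; rw [Int.even_iff] at hpar; omega
        · exact h
      have hφ0 : ntilde κ b = ν - (m : ℤ) := by
        have h := ntilde_eq κ b
        rw [if_neg (by rw [Int.even_iff] at hpar ⊢; push_cast; omega)] at h
        push_cast at h
        rw [Int.even_iff] at hpar
        omega
      show a (ntilde κ (b + 2 * 0)) / C = _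
      rw [show b + 2 * 0 = b by omega, hφ0, hlo, mul_assoc, mul_assoc, mul_div_cancel_left₀ _ hC]
      ring

end Proofs
end

section
/- With the notation of the band-matrix setup: for every n ∈ ℕ, the function P e_n is square-integrable with respect to the measure (x² + 1)^{k₀◊} dx (so b_m^n is well defined), and b_m^n = 0 whenever |m − n| > 2M + k₀ − k₀◊. -/
open MeasureTheory

/-- `s₀ = max_{0 ≤ m ≤ M} (deg p_m - m)`. -/
noncomputable def s0 (M : ℕ) (p : ℕ → Polynomial ℂ) : ℤ :=
  Finset.sup' (Finset.range (M + 1)) Finset.nonempty_range_add_one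
    fun m => ((p m).natDegree : ℤ) - (m : ℤ)

/-- The differential operator `(P f)(x) = Σ_{m=0}^{M} p_m(x) f^{(m)}(x)`. -/
noncomputable def Pop (M : ℕ) (p : ℕ → Polynomial ℂ) (f : ℝ → ℂ) : ℝ → ℂ := fun x =>
  ∑ m ∈ Finset.range (M + 1), (p m).eval (x : ℂ) * deriv^[m] f x

/-- The band matrix `b_m^n = ∫ (P e_n)(x) conj(e◊_m(x)) (x²+1)^{k₀◊} dx`, where
`e_n = e^{(k₀)}_n` and `e◊_m = e^{(k₀◊)}_m`. -/
noncomputable def bmat (M : ℕ) (p : ℕ → Polynomial ℂ) (k₀ kd : ℤ) (m n : ℕ) : ℂ :=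
  ∫ x : ℝ, Pop M p (ebasis k₀ n) x * (starRingEnd ℂ) (ebasis kd m x) *
    ((((x ^ 2 + 1) ^ kd : ℝ)) : ℂ)

open Filter Topology

namespace Stmt10aux

noncomputable def fl (u v : ℤ) : ℝ → ℂ := fun x =>
  ((x : ℂ) - Complex.I) ^ u * ((x : ℂ) + Complex.I) ^ v

lemma subI_ne (x : ℝ) : (x : ℂ) - Complex.I ≠ 0 := by
  intro h
  have := congrArg Complex.im h
  simp at this

lemma addI_ne (x : ℝ) : (x : ℂ) + Complex.I ≠ 0 := by
  intro h
  have := congrArg Complex.im h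
  simp at this

lemma norm_subI (x : ℝ) : ‖(x : ℂ) - Complex.I‖ = Real.sqrt (x ^ 2 + 1) := by
  rw [Complex.norm_def, Complex.normSq_apply]
  norm_num
  ring_nf

lemma norm_addI (x : ℝ) : ‖(x : ℂ) + Complex.I‖ = Real.sqrt (x ^ 2 + 1) := by
  rw [Complex.norm_def, Complex.normSq_apply]
  norm_num
  ring_nf

lemma sqrt_ne (x : ℝ) : Real.sqrt (x ^ 2 + 1) ≠ 0 := by
  positivity

lemma one_le_sqrt (x : ℝ) : 1 ≤ Real.sqrt (x ^ 2 + 1) := by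
  calc (1:ℝ) = Real.sqrt 1 := by simp
    _ ≤ _ := Real.sqrt_le_sqrt (by nlinarith)

lemma norm_fl (u v : ℤ) (x : ℝ) : ‖fl u v x‖ = Real.sqrt (x ^ 2 + 1) ^ (u + v) := by
  unfold fl
  rw [norm_mul, norm_zpow, norm_zpow, norm_subI, norm_addI, ← zpow_add₀ (sqrt_ne x)]

lemma sqrt_zpow_le (x : ℝ) {w : ℤ} (hw : w ≤ -2) :
    Real.sqrt (x ^ 2 + 1) ^ w ≤ (1 + x ^ 2)⁻¹ := by
  have h1 : Real.sqrt (x ^ 2 + 1) ^ w ≤ Real.sqrt (x ^ 2 + 1) ^ (-2 : ℤ) :=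
    zpow_le_zpow_right₀ (one_le_sqrt x) hw
  have h2 : Real.sqrt (x ^ 2 + 1) ^ (-2 : ℤ) = (1 + x ^ 2)⁻¹ := by
    rw [zpow_neg, show ((2:ℤ) = ((2:ℕ):ℤ)) by norm_num, zpow_natCast, Real.sq_sqrt (by positivity)]
    ring_nf
  linarith

lemma fl_continuous (u v : ℤ) : Continuous (fl u v) := by
  apply Continuous.mul
  · exact (Complex.continuous_ofReal.sub continuous_const).zpow₀ u (fun x => Or.inl (subI_ne x))
  · exact (Complex.continuous_ofReal.add continuous_const).zpow₀ v (fun x => Or.inl (addI_ne x))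

lemma fl_integrable {u v : ℤ} (h : u + v ≤ -2) : Integrable (fl u v) := by
  apply Integrable.mono' (g := fun x : ℝ => (1 + x ^ 2)⁻¹) integrable_inv_one_add_sq
    (fl_continuous u v).aestronglyMeasurable
  filter_upwards with x
  rw [norm_fl]
  exact sqrt_zpow_le x h

lemma fl_mul (u v u' v' : ℤ) (x : ℝ) : fl u v x * fl u' v' x = fl (u + u') (v + v') x := by
  unfold fl
  rw [zpow_add₀ (subI_ne x), zpow_add₀ (addI_ne x)]
  ring

lemma fl_hasDerivAt (u v : ℤ) (x : ℝ) :
    HasDerivAt (fl u v) ((u : ℂ) * fl (u - 1) v x + (v : ℂ) * fl u (v - 1) x) x := by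
  have h1 : HasDerivAt (fun z : ℂ => (z - Complex.I) ^ u)
      ((u : ℂ) * ((x : ℂ) - Complex.I) ^ (u - 1)) (x : ℂ) := by
    have := (hasDerivAt_zpow u ((x : ℂ) - Complex.I) (Or.inl (subI_ne x))).comp (x : ℂ)
      ((hasDerivAt_id ((x : ℂ))).sub_const Complex.I)
    simpa [Function.comp_def] using this
  have h2 : HasDerivAt (fun z : ℂ => (z + Complex.I) ^ v)
      ((v : ℂ) * ((x : ℂ) + Complex.I) ^ (v - 1)) (x : ℂ) := by
    have := (hasDerivAt_zpow v ((x : ℂ) + Complex.I) (Or.inl (addI_ne x))).comp (x : ℂ)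
      ((hasDerivAt_id ((x : ℂ))).add_const Complex.I)
    simpa [Function.comp_def] using this
  have := (h1.mul h2).comp_ofReal
  convert this using 1
  · rfl
  unfold fl
  ring

lemma tendsto_sqrt_atTop : Tendsto (fun x : ℝ => Real.sqrt (x ^ 2 + 1)) atTop atTop := by
  apply tendsto_atTop_mono (f := fun x : ℝ => x) _ tendsto_id
  intro x
  calc x ≤ |x| := le_abs_self x
    _ = Real.sqrt (x ^ 2) := by rw [Real.sqrt_sq_eq_abs]
    _ ≤ _ := Real.sqrt_le_sqrt (by nlinarith)

lemma tendsto_sqrt_atBot : Tendsto (fun x : ℝ => Real.sqrt (x ^ 2 + 1)) atBot atTop := by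
  apply tendsto_atTop_mono (f := fun x : ℝ => -x) _ tendsto_neg_atBot_atTop
  intro x
  calc -x ≤ |x| := neg_le_abs x
    _ = Real.sqrt (x ^ 2) := by rw [Real.sqrt_sq_eq_abs]
    _ ≤ _ := Real.sqrt_le_sqrt (by nlinarith)

lemma integral_xc_zero (c : ℂ) (hne : ∀ x : ℝ, (x : ℂ) + c ≠ 0)
    (hnorm : ∀ x : ℝ, ‖(x : ℂ) + c‖ = Real.sqrt (x ^ 2 + 1)) {w : ℤ} (hw : w ≤ -2) :
    ∫ x : ℝ, ((x : ℂ) + c) ^ w = 0 := by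
  have hw1 : ((w : ℂ) + 1) ≠ 0 := by
    have : ((w + 1 : ℤ) : ℂ) ≠ 0 := by
      rw [Int.cast_ne_zero]; omega
    push_cast at this; exact this
  set G : ℝ → ℂ := fun x => ((x : ℂ) + c) ^ (w + 1) / ((w : ℂ) + 1) with hG
  have hderiv : ∀ x : ℝ, HasDerivAt G (((x : ℂ) + c) ^ w) x := by
    intro x
    have h0 : HasDerivAt (fun z : ℂ => (z + c) ^ (w + 1) / ((w : ℂ) + 1))
        ((((w + 1 : ℤ) : ℂ) * ((x : ℂ) + c) ^ (w + 1 - 1)) / ((w : ℂ) + 1)) (x : ℂ) := by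
      have := ((hasDerivAt_zpow (w + 1) ((x : ℂ) + c) (Or.inl (hne x))).comp (x : ℂ)
        ((hasDerivAt_id ((x : ℂ))).add_const c)).div_const ((w : ℂ) + 1)
      simpa using this
    have := h0.comp_ofReal
    convert this using 1
    push_cast
    rw [show w + 1 - 1 = w from by omega]
    field_simp
  have hint : Integrable (fun x : ℝ => ((x : ℂ) + c) ^ w) := by
    apply Integrable.mono' (g := fun x : ℝ => (1 + x ^ 2)⁻¹) integrable_inv_one_add_sq
      (((Complex.continuous_ofReal.add continuous_const).zpow₀ w
        (fun x => Or.inl (hne x))).aestronglyMeasurable)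
    filter_upwards with x
    rw [norm_zpow, Pi.add_apply, hnorm]
    exact sqrt_zpow_le x hw
  have hnorm0 : ∀ l : Filter ℝ, Tendsto (fun x : ℝ => Real.sqrt (x ^ 2 + 1)) l atTop →
      Tendsto G l (𝓝 0) := by
    intro l hl
    rw [hG]
    have : Tendsto (fun x : ℝ => ((x : ℂ) + c) ^ (w + 1)) l (𝓝 0) := by
      rw [tendsto_zero_iff_norm_tendsto_zero]
      have : (fun x : ℝ => ‖((x : ℂ) + c) ^ (w + 1)‖) =
          fun x : ℝ => Real.sqrt (x ^ 2 + 1) ^ (w + 1) := by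
        funext x; rw [norm_zpow, hnorm]
      rw [this]
      exact (tendsto_zpow_atTop_zero (by omega)).comp hl
    simpa using this.div_const ((w : ℂ) + 1)
  have := integral_of_hasDerivAt_of_tendsto hderiv hint (hnorm0 _ tendsto_sqrt_atBot)
    (hnorm0 _ tendsto_sqrt_atTop)
  simpa using this


lemma integral_fl_zero_left : ∀ N : ℕ, ∀ u v : ℤ, u = (N : ℤ) → u + v ≤ -2 →
    ∫ x : ℝ, fl u v x = 0 := by
  intro N
  induction N with
  | zero =>
    intro u v hu hs
    have : ∀ x : ℝ, fl u v x = ((x : ℂ) + Complex.I) ^ v := by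
      intro x; unfold fl; rw [hu]; norm_num
    rw [show (fun x : ℝ => fl u v x) = fun x : ℝ => ((x : ℂ) + Complex.I) ^ v from funext this]
    exact integral_xc_zero Complex.I addI_ne norm_addI (by omega)
  | succ N ih =>
    intro u v hu hs
    have key : ∀ x : ℝ, fl u v x =
        fl (u - 1) (v + 1) x - (2 * Complex.I) * fl (u - 1) v x := by
      intro x
      unfold fl
      have e1 : ((x : ℂ) - Complex.I) ^ u = ((x : ℂ) - Complex.I) ^ (u - 1) * ((x : ℂ) - Complex.I) := by
        rw [← zpow_add_one₀ (subI_ne x)]; congr 1; ring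
      have e2 : ((x : ℂ) + Complex.I) ^ (v + 1) = ((x : ℂ) + Complex.I) ^ v * ((x : ℂ) + Complex.I) := by
        rw [zpow_add_one₀ (addI_ne x)]
      rw [e1, e2]; ring
    rw [show (fun x : ℝ => fl u v x) = fun x : ℝ =>
      fl (u - 1) (v + 1) x - (2 * Complex.I) * fl (u - 1) v x from funext key]
    rw [integral_sub (fl_integrable (by omega)) ((fl_integrable (by omega)).const_mul _),
      integral_const_mul, ih (u - 1) (v + 1) (by omega) (by omega),
      ih (u - 1) v (by omega) (by omega)]
    simp

lemma integral_fl_zero_right : ∀ N : ℕ, ∀ u v : ℤ, v = (N : ℤ) → u + v ≤ -2 →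
    ∫ x : ℝ, fl u v x = 0 := by
  intro N
  induction N with
  | zero =>
    intro u v hv hs
    have : ∀ x : ℝ, fl u v x = ((x : ℂ) + (-Complex.I)) ^ u := by
      intro x; unfold fl; rw [hv]; norm_num; rw [sub_eq_add_neg]
    rw [show (fun x : ℝ => fl u v x) = fun x : ℝ => ((x : ℂ) + (-Complex.I)) ^ u from funext this]
    exact integral_xc_zero (-Complex.I) (fun x => by rw [← sub_eq_add_neg]; exact subI_ne x)
      (fun x => by rw [← sub_eq_add_neg]; exact norm_subI x) (by omega)
  | succ N ih =>
    intro u v hv hs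
    have key : ∀ x : ℝ, fl u v x =
        fl (u + 1) (v - 1) x + (2 * Complex.I) * fl u (v - 1) x := by
      intro x
      unfold fl
      have e1 : ((x : ℂ) + Complex.I) ^ v = ((x : ℂ) + Complex.I) ^ (v - 1) * ((x : ℂ) + Complex.I) := by
        rw [← zpow_add_one₀ (addI_ne x)]; congr 1; ring
      have e2 : ((x : ℂ) - Complex.I) ^ (u + 1) = ((x : ℂ) - Complex.I) ^ u * ((x : ℂ) - Complex.I) := by
        rw [zpow_add_one₀ (subI_ne x)]
      rw [e1, e2]; ring
    rw [show (fun x : ℝ => fl u v x) = fun x : ℝ =>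
      fl (u + 1) (v - 1) x + (2 * Complex.I) * fl u (v - 1) x from funext key]
    rw [integral_add (fl_integrable (by omega)) ((fl_integrable (by omega)).const_mul _),
      integral_const_mul, ih (u + 1) (v - 1) (by omega) (by omega),
      ih u (v - 1) (by omega) (by omega)]
    simp

lemma integral_fl_zero {u v : ℤ} (hs : u + v ≤ -2) (h : 0 ≤ u ∨ 0 ≤ v) :
    ∫ x : ℝ, fl u v x = 0 := by
  rcases h with h | h
  · exact integral_fl_zero_left u.toNat u v (by omega) hs
  · exact integral_fl_zero_right v.toNat u v (by omega) hs

/-- Functions representable as finite combinations of `fl u v` with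
`u₀ ≤ u`, `v₀ ≤ v`, `u + v ≤ s`. -/
inductive Rep (u₀ v₀ s : ℤ) : (ℝ → ℂ) → Prop
  | zero : Rep u₀ v₀ s (fun _ => 0)
  | single (c : ℂ) (u v : ℤ) (hu : u₀ ≤ u) (hv : v₀ ≤ v) (hs : u + v ≤ s) :
      Rep u₀ v₀ s (fun x => c * fl u v x)
  | add {g h : ℝ → ℂ} : Rep u₀ v₀ s g → Rep u₀ v₀ s h → Rep u₀ v₀ s (fun x => g x + h x)

lemma Rep.congr {u₀ v₀ s : ℤ} {g h : ℝ → ℂ} (hg : Rep u₀ v₀ s g) (he : ∀ x, h x = g x) :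
    Rep u₀ v₀ s h := by
  have : h = g := funext he
  rw [this]; exact hg

lemma Rep.mono {u₀ v₀ s u₀' v₀' s' : ℤ} {g : ℝ → ℂ} (hg : Rep u₀ v₀ s g)
    (hu : u₀' ≤ u₀) (hv : v₀' ≤ v₀) (hs : s ≤ s') : Rep u₀' v₀' s' g := by
  induction hg with
  | zero => exact Rep.zero
  | single c u v h1 h2 h3 => exact Rep.single c u v (by omega) (by omega) (by omega)
  | add _ _ ih1 ih2 => exact Rep.add ih1 ih2

lemma Rep.const_mul {u₀ v₀ s : ℤ} {g : ℝ → ℂ} (hg : Rep u₀ v₀ s g) (c : ℂ) :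
    Rep u₀ v₀ s (fun x => c * g x) := by
  induction hg with
  | zero => exact Rep.zero.congr (by simp)
  | single c' u v h1 h2 h3 => exact (Rep.single (c * c') u v h1 h2 h3).congr (fun x => by ring)
  | add _ _ ih1 ih2 => exact (ih1.add ih2).congr (fun x => by ring)

lemma Rep.continuous {u₀ v₀ s : ℤ} {g : ℝ → ℂ} (hg : Rep u₀ v₀ s g) : Continuous g := by
  induction hg with
  | zero => exact continuous_const
  | single c u v h1 h2 h3 => exact continuous_const.mul (fl_continuous u v)
  | add _ _ ih1 ih2 => exact ih1.add ih2

lemma Rep.norm_bound {u₀ v₀ s : ℤ} {g : ℝ → ℂ} (hg : Rep u₀ v₀ s g) :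
    ∃ C : ℝ, 0 ≤ C ∧ ∀ x : ℝ, ‖g x‖ ≤ C * Real.sqrt (x ^ 2 + 1) ^ s := by
  induction hg with
  | zero => exact ⟨0, le_refl 0, fun x => by simp⟩
  | single c u v h1 h2 h3 =>
    refine ⟨‖c‖, norm_nonneg c, fun x => ?_⟩
    rw [norm_mul, norm_fl]
    exact mul_le_mul_of_nonneg_left (zpow_le_zpow_right₀ (one_le_sqrt x) h3) (norm_nonneg c)
  | add _ _ ih1 ih2 =>
    obtain ⟨C1, hC1, hb1⟩ := ih1
    obtain ⟨C2, hC2, hb2⟩ := ih2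
    refine ⟨C1 + C2, by linarith, fun x => ?_⟩
    calc ‖_ + _‖ ≤ _ := norm_add_le _ _
      _ ≤ C1 * Real.sqrt (x ^ 2 + 1) ^ s + C2 * Real.sqrt (x ^ 2 + 1) ^ s :=
        add_le_add (hb1 x) (hb2 x)
      _ = _ := by ring

lemma Rep.integrable {u₀ v₀ s : ℤ} {g : ℝ → ℂ} (hg : Rep u₀ v₀ s g) (hs : s ≤ -2) :
    Integrable g := by
  induction hg with
  | zero => exact integrable_zero _ _ _
  | single c u v h1 h2 h3 => exact (fl_integrable (by omega)).const_mul c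
  | add _ _ ih1 ih2 => exact ih1.add ih2

lemma Rep.integral_zero {u₀ v₀ s : ℤ} {g : ℝ → ℂ} (hg : Rep u₀ v₀ s g) (hs : s ≤ -2)
    (h : 0 ≤ u₀ ∨ 0 ≤ v₀) : ∫ x : ℝ, g x = 0 := by
  induction hg with
  | zero => simp
  | single c u v h1 h2 h3 =>
    rw [integral_const_mul, integral_fl_zero (by omega) (by omega)]
    simp
  | add hg1 hg2 ih1 ih2 =>
    rw [integral_add (hg1.integrable hs) (hg2.integrable hs), ih1, ih2]
    simp

lemma Rep.hasDerivAt {u₀ v₀ s : ℤ} {g : ℝ → ℂ} (hg : Rep u₀ v₀ s g) :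
    ∃ G : ℝ → ℂ, (∀ x, HasDerivAt g (G x) x) ∧ Rep (u₀ - 1) (v₀ - 1) (s - 1) G := by
  induction hg with
  | zero => exact ⟨fun _ => 0, fun x => hasDerivAt_const x 0, Rep.zero⟩
  | single c u v h1 h2 h3 =>
    refine ⟨fun x => c * ((u : ℂ) * fl (u - 1) v x + (v : ℂ) * fl u (v - 1) x),
      fun x => (fl_hasDerivAt u v x).const_mul c, ?_⟩
    have r1 : Rep (u₀ - 1) (v₀ - 1) (s - 1) (fun x => (c * u) * fl (u - 1) v x) :=
      Rep.single _ (u - 1) v (by omega) (by omega) (by omega)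
    have r2 : Rep (u₀ - 1) (v₀ - 1) (s - 1) (fun x => (c * v) * fl u (v - 1) x) :=
      Rep.single _ u (v - 1) (by omega) (by omega) (by omega)
    exact (r1.add r2).congr (fun x => by ring)
  | add hg1 hg2 ih1 ih2 =>
    obtain ⟨G1, hd1, hr1⟩ := ih1
    obtain ⟨G2, hd2, hr2⟩ := ih2
    exact ⟨fun x => G1 x + G2 x, fun x => (hd1 x).add (hd2 x), hr1.add hr2⟩

lemma Rep.deriv {u₀ v₀ s : ℤ} {g : ℝ → ℂ} (hg : Rep u₀ v₀ s g) :
    Rep (u₀ - 1) (v₀ - 1) (s - 1) (deriv g) := by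
  obtain ⟨G, hd, hr⟩ := hg.hasDerivAt
  exact hr.congr (fun x => (hd x).deriv)

lemma Rep.mul_fl {u₀ v₀ s : ℤ} {g : ℝ → ℂ} (hg : Rep u₀ v₀ s g) (u' v' : ℤ) :
    Rep (u₀ + u') (v₀ + v') (s + u' + v') (fun x => g x * fl u' v' x) := by
  induction hg with
  | zero => exact Rep.zero.congr (by simp)
  | single c u v h1 h2 h3 =>
    exact (Rep.single c (u + u') (v + v') (by omega) (by omega) (by omega)).congr
      (fun x => by rw [← fl_mul]; ring)
  | add _ _ ih1 ih2 => exact (ih1.add ih2).congr (fun x => by ring)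

lemma Rep.mul_x {u₀ v₀ s : ℤ} {g : ℝ → ℂ} (hg : Rep u₀ v₀ s g) :
    Rep u₀ v₀ (s + 1) (fun x => (x : ℂ) * g x) := by
  induction hg with
  | zero => exact Rep.zero.congr (by simp)
  | single c u v h1 h2 h3 =>
    have key : ∀ x : ℝ, (x : ℂ) * (c * fl u v x) =
        (c / 2) * fl (u + 1) v x + (c / 2) * fl u (v + 1) x := by
      intro x
      have e1 : fl (u + 1) v x = ((x : ℂ) - Complex.I) * fl u v x := by
        unfold fl; rw [zpow_add_one₀ (subI_ne x)]; ring
      have e2 : fl u (v + 1) x = ((x : ℂ) + Complex.I) * fl u v x := by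
        unfold fl; rw [zpow_add_one₀ (addI_ne x)]; ring
      rw [e1, e2]; ring
    exact ((Rep.single (c / 2) (u + 1) v (by omega) (by omega) (by omega)).add
      (Rep.single (c / 2) u (v + 1) (by omega) (by omega) (by omega))).congr key
  | add _ _ ih1 ih2 => exact (ih1.add ih2).congr (fun x => by ring)

lemma Rep.mul_x_pow {u₀ v₀ s : ℤ} {g : ℝ → ℂ} (hg : Rep u₀ v₀ s g) (d : ℕ) :
    Rep u₀ v₀ (s + d) (fun x => (x : ℂ) ^ d * g x) := by
  induction d with
  | zero =>
    refine (hg.mono (le_refl _) (le_refl _) (by simp)).congr (fun x => by norm_num)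
  | succ d ih =>
    have := ih.mul_x
    exact (this.mono (le_refl _) (le_refl _) (by push_cast; omega)).congr
      (fun x => by push_cast; ring)

lemma Rep.finset_sum {u₀ v₀ s : ℤ} {ι : Type*} (t : Finset ι) (F : ι → ℝ → ℂ)
    (h : ∀ i ∈ t, Rep u₀ v₀ s (F i)) : Rep u₀ v₀ s (fun x => ∑ i ∈ t, F i x) := by
  induction t using Finset.cons_induction with
  | empty => exact Rep.zero.congr (by simp)
  | cons a t ha ih =>
    have := (h a (Finset.mem_cons_self a t)).add (ih (fun i hi => h i (Finset.mem_cons.2 (Or.inr hi))))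
    exact this.congr (fun x => by rw [Finset.sum_cons])

lemma Rep.poly_mul {u₀ v₀ s : ℤ} {g : ℝ → ℂ} (hg : Rep u₀ v₀ s g) (q : Polynomial ℂ) :
    Rep u₀ v₀ (s + q.natDegree) (fun x => q.eval (x : ℂ) * g x) := by
  have key : ∀ x : ℝ, q.eval (x : ℂ) * g x =
      ∑ i ∈ Finset.range (q.natDegree + 1), q.coeff i * ((x : ℂ) ^ i * g x) := by
    intro x
    rw [Polynomial.eval_eq_sum_range, Finset.sum_mul]
    congr 1; funext i; ring
  refine (Rep.finset_sum (Finset.range (q.natDegree + 1)) _ (fun i hi => ?_)).congr key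
  have hi' : i ≤ q.natDegree := by
    simp only [Finset.mem_range] at hi; omega
  exact ((hg.mul_x_pow i).const_mul (q.coeff i)).mono (le_refl _) (le_refl _) (by omega)

lemma psi_eq (k a : ℤ) (x : ℝ) : psi k a x = fl a (-(k + 1) - a) x := by
  unfold psi fl
  rw [div_zpow, zpow_sub₀ (addI_ne x)]
  ring

lemma rep_ebasis (k : ℤ) (n : ℕ) :
    Rep (ntilde k n) (-(k + 1) - ntilde k n) (-(k + 1)) (ebasis k n) := by
  refine (Rep.single (((Real.sqrt Real.pi)⁻¹ : ℝ) : ℂ) (ntilde k n) (-(k + 1) - ntilde k n)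
    (le_refl _) (le_refl _) (by omega)).congr (fun x => ?_)
  unfold ebasis
  rw [psi_eq]

lemma rep_iter_deriv (k : ℤ) (n : ℕ) (m : ℕ) :
    Rep (ntilde k n - m) (-(k + 1) - ntilde k n - m) (-(k + 1) - m)
      (deriv^[m] (ebasis k n)) := by
  induction m with
  | zero =>
    simpa using rep_ebasis k n
  | succ m ih =>
    rw [Function.iterate_succ_apply']
    exact ih.deriv.mono (by push_cast; omega) (by push_cast; omega) (by push_cast; omega)

lemma rep_Pop (M : ℕ) (p : ℕ → Polynomial ℂ) (k : ℤ) (n : ℕ) :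
    Rep (ntilde k n - M) (-(k + 1) - ntilde k n - M) (s0 M p - k - 1)
      (Pop M p (ebasis k n)) := by
  refine (Rep.finset_sum (Finset.range (M + 1)) _ (fun m hm => ?_)).congr (fun x => rfl)
  have hmM : m ≤ M := by simp only [Finset.mem_range] at hm; omega
  have hdeg : ((p m).natDegree : ℤ) - m ≤ s0 M p := by
    unfold s0
    exact Finset.le_sup' (fun m : ℕ => ((p m).natDegree : ℤ) - (m : ℤ)) hm
  exact ((rep_iter_deriv k n m).poly_mul (p m)).mono (by push_cast; omega)
    (by push_cast; omega) (by push_cast; omega)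

lemma one_add_sq_factor (x : ℝ) : ((x : ℂ) ^ 2 + 1) = ((x : ℂ) - Complex.I) * ((x : ℂ) + Complex.I) := by
  linear_combination Complex.I_sq

lemma conj_weight (k b : ℤ) (x : ℝ) :
    (starRingEnd ℂ) (psi k b x) * (((x ^ 2 + 1) ^ k : ℝ) : ℂ) = fl (-1 - b) (b + k) x := by
  have h1 : (starRingEnd ℂ) (psi k b x) =
      ((x : ℂ) - Complex.I) ^ (-(k + 1)) * (((x : ℂ) + Complex.I) / ((x : ℂ) - Complex.I)) ^ b := by
    unfold psi
    rw [map_mul, map_zpow₀, map_zpow₀, map_div₀, map_add, map_sub, Complex.conj_ofReal,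
      Complex.conj_I]
    ring_nf
  have h2 : (((x ^ 2 + 1) ^ k : ℝ) : ℂ) =
      ((x : ℂ) - Complex.I) ^ k * ((x : ℂ) + Complex.I) ^ k := by
    rw [Complex.ofReal_zpow]
    push_cast
    rw [one_add_sq_factor x, mul_zpow]
  rw [h1, h2]
  unfold fl
  rw [div_zpow, zpow_add₀ (addI_ne x),
    show (-1 - b : ℤ) = (-(k + 1)) + k - b from by ring,
    zpow_sub₀ (subI_ne x), zpow_add₀ (subI_ne x)]
  ring

lemma band_arith (M k₀ kd : ℤ) (hM : 1 ≤ M) (hK : -M ≤ k₀ - kd) (hk₀ : 0 ≤ k₀) (m n : ℕ)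
    (h : 2 * M + k₀ - kd < |(m : ℤ) - (n : ℤ)|) :
    M + 1 ≤ ntilde k₀ n - ntilde kd m ∨ M + 1 + (k₀ - kd) ≤ ntilde kd m - ntilde k₀ n := by
  unfold ntilde
  have fb : ∀ z : ℤ, 2 * ⌊(z : ℚ) / 2⌋ ≤ z ∧ z ≤ 2 * ⌊(z : ℚ) / 2⌋ + 1 := by
    intro z
    constructor
    · have h1 := Int.floor_le ((z : ℚ) / 2)
      have : ((2 * ⌊(z : ℚ) / 2⌋ : ℤ) : ℚ) ≤ (z : ℚ) := by push_cast; linarith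
      exact_mod_cast this
    · have h2 := Int.lt_floor_add_one ((z : ℚ) / 2)
      have : (z : ℚ) < ((2 * ⌊(z : ℚ) / 2⌋ + 2 : ℤ) : ℚ) := by push_cast; linarith
      have := lt_of_lt_of_le this (le_refl _)
      have h3 : z < 2 * ⌊(z : ℚ) / 2⌋ + 2 := by exact_mod_cast this
      omega
  have e1 : (-(k₀ : ℚ) - 1) / 2 = ((-k₀ - 1 : ℤ) : ℚ) / 2 := by push_cast; ring
  have e2 : (-(kd : ℚ) - 1) / 2 = ((-kd - 1 : ℤ) : ℚ) / 2 := by push_cast; ring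
  have e3 : ((n : ℚ) + 1) / 2 = (((n : ℤ) + 1 : ℤ) : ℚ) / 2 := by push_cast; ring
  have e4 : ((m : ℚ) + 1) / 2 = (((m : ℤ) + 1 : ℤ) : ℚ) / 2 := by push_cast; ring
  rw [e1, e2, e3, e4]
  have hb1 := fb (-k₀ - 1)
  have hb2 := fb (-kd - 1)
  have hb3 := fb ((n : ℤ) + 1)
  have hb4 := fb ((m : ℤ) + 1)
  rw [lt_abs] at h
  by_cases h1 : Even ((n : ℤ) + k₀ + 1) <;> by_cases h2 : Even ((m : ℤ) + kd + 1) <;>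
    simp only [h1, h2, if_true, if_false] <;>
    [skip; skip; skip; skip] <;>
    (try rw [Int.even_iff] at h1) <;> (try rw [Int.even_iff] at h2) <;>
    (try rw [Int.not_even_iff] at h1) <;> (try rw [Int.not_even_iff] at h2) <;>
    omega

end Stmt10aux

open Stmt10aux

/-- In the band-matrix setup (polynomial coefficients `p_0, …, p_M`
with `p_M ≠ 0`, integer `k₀ ≥ 0` and `k₀◊ ≤ k₀ - s₀`): for every `n`, `P e_n` is
square-integrable with respect to the measure `(x² + 1)^{k₀◊} dx` (so `b_m^n` is well
defined), and `b_m^n = 0` whenever `|m - n| > 2M + k₀ - k₀◊`. -/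


theorem stmt10 (M : ℕ) (hM : 1 ≤ M) (p : ℕ → Polynomial ℂ) (hpM : p M ≠ 0)
    (k₀ : ℤ) (hk₀ : 0 ≤ k₀) (kd : ℤ) (hkd : kd ≤ k₀ - s0 M p) :
    (∀ n : ℕ, MemLp (Pop M p (ebasis k₀ n)) 2 (wMeasure kd)) ∧
    (∀ m n : ℕ, |(m : ℤ) - (n : ℤ)| > 2 * (M : ℤ) + k₀ - kd → bmat M p k₀ kd m n = 0) := by
  have hs0M : -(M : ℤ) ≤ s0 M p := by
    have h1 : ((p M).natDegree : ℤ) - M ≤ s0 M p := by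
      unfold s0
      exact Finset.le_sup' (fun m : ℕ => ((p m).natDegree : ℤ) - (m : ℤ))
        (Finset.self_mem_range_succ M)
    have h2 : (0 : ℤ) ≤ ((p M).natDegree : ℤ) := by positivity
    omega
  constructor
  · -- Memℒp part
    intro n
    have hrep := rep_Pop M p k₀ n
    have hcont : Continuous (Pop M p (ebasis k₀ n)) := hrep.continuous
    obtain ⟨C, hC, hbound⟩ := hrep.norm_bound
    have hdpos : ∀ x : ℝ, (0 : ℝ) < (x ^ 2 + 1) ^ kd := fun x => zpow_pos (by positivity) kd
    have hcw : Continuous fun x : ℝ => (x ^ 2 + 1 : ℝ) ^ kd :=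
      ((continuous_pow 2).add continuous_const).zpow₀ kd (fun x => Or.inl (by positivity : (x ^ 2 + 1 : ℝ) ≠ 0))
    have hmeasd : Measurable fun x : ℝ => ENNReal.ofReal ((x ^ 2 + 1) ^ kd) :=
      Measurable.ennreal_ofReal hcw.measurable
    rw [memLp_two_iff_integrable_sq_norm (hcont.aestronglyMeasurable), wMeasure,
      integrable_withDensity_iff hmeasd (Filter.Eventually.of_forall fun x => ENNReal.ofReal_lt_top)]
    have hfun : (fun x : ℝ => ‖Pop M p (ebasis k₀ n) x‖ ^ 2 *
          (ENNReal.ofReal ((x ^ 2 + 1) ^ kd)).toReal)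
        = fun x : ℝ => ‖Pop M p (ebasis k₀ n) x‖ ^ 2 * (x ^ 2 + 1) ^ kd := by
      funext x
      rw [ENNReal.toReal_ofReal (le_of_lt (hdpos x))]
    rw [hfun]
    apply Integrable.mono' ((integrable_inv_one_add_sq).const_mul (C ^ 2))
      ((hcont.norm.pow 2).mul hcw).aestronglyMeasurable
    filter_upwards with x
    simp only [Pi.mul_apply, Pi.pow_apply]
    rw [Real.norm_eq_abs, abs_of_nonneg (mul_nonneg (by positivity) (le_of_lt (hdpos x)))]
    have h1 : ‖Pop M p (ebasis k₀ n) x‖ ^ 2 ≤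
        C ^ 2 * (Real.sqrt (x ^ 2 + 1) ^ (s0 M p - k₀ - 1)) ^ 2 := by
      rw [← mul_pow]
      exact pow_le_pow_left₀ (norm_nonneg _) (hbound x) 2
    have h2 : (Real.sqrt (x ^ 2 + 1) ^ (s0 M p - k₀ - 1)) ^ 2
        = (x ^ 2 + 1 : ℝ) ^ (s0 M p - k₀ - 1) := by
      rw [sq, ← mul_zpow, Real.mul_self_sqrt (by positivity)]
    have h3 : (x ^ 2 + 1 : ℝ) ^ (s0 M p - k₀ - 1) * (x ^ 2 + 1) ^ kd
        = (x ^ 2 + 1 : ℝ) ^ (s0 M p - k₀ - 1 + kd) := (zpow_add₀ (by positivity) _ _).symm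
    have h4 : (x ^ 2 + 1 : ℝ) ^ (s0 M p - k₀ - 1 + kd) ≤ (x ^ 2 + 1 : ℝ) ^ (-1 : ℤ) :=
      zpow_le_zpow_right₀ (by nlinarith) (by omega)
    have h5 : (x ^ 2 + 1 : ℝ) ^ (-1 : ℤ) = (1 + x ^ 2)⁻¹ := by
      rw [zpow_neg_one]
      ring_nf
    calc ‖Pop M p (ebasis k₀ n) x‖ ^ 2 * (x ^ 2 + 1) ^ kd
        ≤ (C ^ 2 * (Real.sqrt (x ^ 2 + 1) ^ (s0 M p - k₀ - 1)) ^ 2) * (x ^ 2 + 1) ^ kd :=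
          mul_le_mul_of_nonneg_right h1 (le_of_lt (hdpos x))
      _ = C ^ 2 * ((x ^ 2 + 1 : ℝ) ^ (s0 M p - k₀ - 1) * (x ^ 2 + 1) ^ kd) := by
          rw [h2]; ring
      _ = C ^ 2 * (x ^ 2 + 1 : ℝ) ^ (s0 M p - k₀ - 1 + kd) := by rw [h3]
      _ ≤ C ^ 2 * (x ^ 2 + 1 : ℝ) ^ (-1 : ℤ) :=
          mul_le_mul_of_nonneg_left h4 (by positivity)
      _ = C ^ 2 * (1 + x ^ 2)⁻¹ := by rw [h5]
  · -- band part
    intro m n hband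
    set a := ntilde k₀ n with ha
    set b := ntilde kd m with hb
    have hPop := rep_Pop M p k₀ n
    have hrep : Rep (a - M + (-1 - b)) (-(k₀ + 1) - a - M + (b + kd))
        (s0 M p - k₀ - 1 + (-1 - b) + (b + kd))
        (fun x : ℝ => Pop M p (ebasis k₀ n) x * (starRingEnd ℂ) (ebasis kd m x) *
          ((((x ^ 2 + 1) ^ kd : ℝ)) : ℂ)) := by
      have h1 := (hPop.mul_fl (-1 - b) (b + kd)).const_mul (((Real.sqrt Real.pi)⁻¹ : ℝ) : ℂ)
      refine (h1.mono (le_refl _) (le_refl _) (le_refl _)).congr (fun x => ?_)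
      have hcw : (starRingEnd ℂ) (ebasis kd m x) * (((x ^ 2 + 1) ^ kd : ℝ) : ℂ)
          = (((Real.sqrt Real.pi)⁻¹ : ℝ) : ℂ) * fl (-1 - b) (b + kd) x := by
        unfold ebasis
        rw [map_mul, Complex.conj_ofReal, mul_assoc, conj_weight]
      rw [mul_assoc, hcw]
      ring
    have hK : -(M : ℤ) ≤ k₀ - kd := by omega
    have hb0 := band_arith M k₀ kd (by exact_mod_cast hM) hK hk₀ m n hband
    unfold bmat
    rcases hb0 with h | h
    · exact hrep.integral_zero (by omega) (Or.inl (by omega))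
    · exact hrep.integral_zero (by omega) (Or.inr (by omega))
end

section
/- With the notation of the band-matrix setup: there exists a polynomial A with real coefficients, of degree at most M, such that |b_m^n| ≤ A(n) for all m, n ∈ ℕ. -/
open MeasureTheory

namespace Stmt11Aux

/-- The building block `(x - i)^a (x + i)^b`. -/
noncomputable def FF (a b : ℤ) : ℝ → ℂ := fun x =>
  ((x : ℂ) - Complex.I) ^ a * ((x : ℂ) + Complex.I) ^ b

lemma sub_I_ne (x : ℝ) : (x : ℂ) - Complex.I ≠ 0 := by
  intro h; have := congrArg Complex.im h; simp at this

lemma add_I_ne (x : ℝ) : (x : ℂ) + Complex.I ≠ 0 := by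
  intro h; have := congrArg Complex.im h; simp at this

lemma norm_sub_I (x : ℝ) : ‖(x : ℂ) - Complex.I‖ = Real.sqrt (x ^ 2 + 1) := by
  rw [Complex.norm_def]
  congr 1
  simp [Complex.normSq_apply]
  ring

lemma norm_add_I (x : ℝ) : ‖(x : ℂ) + Complex.I‖ = Real.sqrt (x ^ 2 + 1) := by
  rw [Complex.norm_def]
  congr 1
  simp [Complex.normSq_apply]
  ring

lemma one_le_w (x : ℝ) : 1 ≤ x ^ 2 + 1 := by nlinarith [sq_nonneg x]

lemma w_pos (x : ℝ) : 0 < x ^ 2 + 1 := by nlinarith [sq_nonneg x]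

lemma sqrt_zpow (x : ℝ) (a : ℤ) :
    Real.sqrt (x ^ 2 + 1) ^ a = (x ^ 2 + 1) ^ ((a : ℝ) / 2) := by
  rw [← Real.rpow_intCast (Real.sqrt (x ^ 2 + 1)) a, Real.sqrt_eq_rpow,
    ← Real.rpow_mul (le_of_lt (w_pos x))]
  congr 1
  ring

lemma norm_FF (a b : ℤ) (x : ℝ) :
    ‖FF a b x‖ = (x ^ 2 + 1) ^ (((a + b : ℤ) : ℝ) / 2) := by
  rw [FF, norm_mul, norm_zpow, norm_zpow, norm_sub_I, norm_add_I, sqrt_zpow, sqrt_zpow,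
    ← Real.rpow_add (w_pos x)]
  push_cast
  ring_nf

lemma hasDerivAt_zc (c : ℂ) (a : ℤ) (x : ℝ) (h : (x : ℂ) + c ≠ 0) :
    HasDerivAt (fun y : ℝ => ((y : ℂ) + c) ^ a) ((a : ℂ) * ((x : ℂ) + c) ^ (a - 1)) x := by
  have hf : HasDerivAt (fun z : ℂ => z + c) 1 (x : ℂ) := (hasDerivAt_id _).add_const c
  have hg := hasDerivAt_zpow a ((x : ℂ) + c) (Or.inl h)
  have h1 := HasDerivAt.comp (x : ℂ) hg hf
  simpa [Function.comp] using h1.comp_ofReal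

lemma FF_hasDerivAt (a b : ℤ) (x : ℝ) :
    HasDerivAt (FF a b)
      (((a : ℤ) : ℂ) * FF (a - 1) b x + ((b : ℤ) : ℂ) * FF a (b - 1) x) x := by
  have h1 : HasDerivAt (fun y : ℝ => ((y : ℂ) - Complex.I) ^ a)
      ((a : ℂ) * ((x : ℂ) - Complex.I) ^ (a - 1)) x := by
    have := hasDerivAt_zc (-Complex.I) a x (by rw [← sub_eq_add_neg]; exact sub_I_ne x)
    simpa [sub_eq_add_neg] using this
  have h2 := hasDerivAt_zc Complex.I b x (add_I_ne x)
  have h3 := h1.mul h2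
  convert h3 using 1
  · rfl
  show (a:ℂ) * (((x:ℂ) - Complex.I) ^ (a-1) * ((x:ℂ)+Complex.I)^b) + (b:ℂ) * (((x:ℂ) - Complex.I) ^ a * ((x:ℂ)+Complex.I)^(b-1)) = _
  ring
  rfl

lemma FF_diff (a b : ℤ) (x : ℝ) : DifferentiableAt ℝ (FF a b) x :=
  (FF_hasDerivAt a b x).differentiableAt

lemma iter_FF (m : ℕ) : ∀ a b : ℤ, ∃ c : ℕ → ℂ,
    (∀ j, ‖c j‖ ≤ ((|a| + |b| + 2 * m : ℤ) : ℝ) ^ m) ∧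
    (∀ j, m < j → c j = 0) ∧
    deriv^[m] (FF a b) =
      fun x => ∑ j ∈ Finset.range (m + 1), c j * FF (a - j) (b - ((m : ℤ) - j)) x := by
  induction m with
  | zero =>
    intro a b
    refine ⟨fun j => if j = 0 then 1 else 0, ?_, ?_, ?_⟩
    · intro j
      by_cases h : j = 0 <;> simp [h]
    · intro j hj
      simp [Nat.pos_iff_ne_zero.mp hj]
    · funext x
      simp [FF]
  | succ m ih =>
    intro a b
    obtain ⟨c, hc, hc0, hrep⟩ := ih a b
    have hB0 : (0 : ℝ) ≤ ((|a| + |b| + 2 * m : ℤ) : ℝ) := by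
      have : (0 : ℤ) ≤ |a| + |b| + 2 * m := by positivity
      exact_mod_cast this
    have hB0' : (0 : ℝ) ≤ ((|a| + |b| + 2 * (m + 1 : ℕ) : ℤ) : ℝ) := by
      have : (0 : ℤ) ≤ |a| + |b| + 2 * (m + 1 : ℕ) := by positivity
      exact_mod_cast this
    refine ⟨fun j => (if j = 0 then 0 else c (j - 1) * ((a - ((j - 1 : ℕ) : ℤ) : ℤ) : ℂ)) +
        c j * ((b - ((m : ℤ) - (j : ℤ)) : ℤ) : ℂ), ?_, ?_, ?_⟩
    · intro j
      have key : ‖(if j = 0 then (0:ℂ) else c (j - 1) * ((a - ((j - 1 : ℕ) : ℤ) : ℤ) : ℂ)) +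
          c j * ((b - ((m : ℤ) - (j : ℤ)) : ℤ) : ℂ)‖ ≤
          ((|a| + |b| + 2 * m : ℤ) : ℝ) ^ m * ((|a| : ℤ) + m : ℝ) +
          ((|a| + |b| + 2 * m : ℤ) : ℝ) ^ m * ((|b| : ℤ) + m : ℝ) := by
        refine (norm_add_le _ _).trans (add_le_add ?_ ?_)
        · split
          · simp only [norm_zero]
            have : (0:ℤ) ≤ |a| := abs_nonneg a
            have h2 : (0:ℝ) ≤ ((|a| : ℤ) : ℝ) := by exact_mod_cast this
            positivity
          · rename_i hj0
            by_cases hjm : m < j - 1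
            · rw [hc0 _ hjm]
              simp only [zero_mul, norm_zero]
              have : (0:ℤ) ≤ |a| := abs_nonneg a
              have h2 : (0:ℝ) ≤ ((|a| : ℤ) : ℝ) := by exact_mod_cast this
              positivity
            · push_neg at hjm
              rw [norm_mul]
              refine mul_le_mul (hc _) ?_ (norm_nonneg _) (by positivity)
              rw [Complex.norm_intCast]
              have h1 : |a - ((j - 1 : ℕ) : ℤ)| ≤ |a| + m := by
                refine (abs_sub a _).trans ?_
                have : |((j - 1 : ℕ) : ℤ)| = ((j - 1 : ℕ) : ℤ) := abs_of_nonneg (by positivity)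
                rw [this]
                omega
              calc |((a - ((j - 1 : ℕ) : ℤ) : ℤ) : ℝ)| = ((|a - ((j - 1 : ℕ) : ℤ)| : ℤ) : ℝ) := by
                    push_cast; rfl
                _ ≤ ((|a| + m : ℤ) : ℝ) := by exact_mod_cast h1
                _ = ((|a| : ℤ) : ℝ) + m := by push_cast; ring
        · by_cases hjm : m < j
          · rw [hc0 _ hjm]
            simp only [zero_mul, norm_zero]
            have : (0:ℤ) ≤ |b| := abs_nonneg b
            have h2 : (0:ℝ) ≤ ((|b| : ℤ) : ℝ) := by exact_mod_cast this
            positivity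
          · push_neg at hjm
            rw [norm_mul]
            refine mul_le_mul (hc _) ?_ (norm_nonneg _) (by positivity)
            rw [Complex.norm_intCast]
            have h1 : |b - ((m : ℤ) - (j : ℤ))| ≤ |b| + m := by
              refine (abs_sub b _).trans ?_
              have : |(m : ℤ) - (j : ℤ)| ≤ (m : ℤ) := by
                rw [abs_le]; omega
              omega
            calc |((b - ((m : ℤ) - (j : ℤ)) : ℤ) : ℝ)| = ((|b - ((m : ℤ) - (j : ℤ))| : ℤ) : ℝ) := by
                  push_cast; rfl
              _ ≤ ((|b| + m : ℤ) : ℝ) := by exact_mod_cast h1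
              _ = ((|b| : ℤ) : ℝ) + m := by push_cast; ring
      refine key.trans ?_
      have step : ((|a| + |b| + 2 * m : ℤ) : ℝ) ^ m * ((|a| : ℤ) + m : ℝ) +
          ((|a| + |b| + 2 * m : ℤ) : ℝ) ^ m * ((|b| : ℤ) + m : ℝ) =
          ((|a| + |b| + 2 * m : ℤ) : ℝ) ^ (m + 1) := by
        rw [pow_succ]
        push_cast
        ring
      rw [step]
      refine pow_le_pow_left₀ hB0 ?_ (m + 1)
      push_cast
      linarith
    · intro j hj
      have h1 : m < j - 1 := by omega
      have h2 : m < j := by omega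
      simp [hc0 _ h1, hc0 _ h2]
    · rw [Function.iterate_succ_apply', hrep]
      funext x
      have hder : HasDerivAt
          (fun x => ∑ j ∈ Finset.range (m + 1), c j * FF (a - j) (b - ((m : ℤ) - j)) x)
          (∑ j ∈ Finset.range (m + 1), c j *
            ((((a - j : ℤ) : ℤ) : ℂ) * FF (a - j - 1) (b - ((m : ℤ) - j)) x +
             (((b - ((m : ℤ) - j) : ℤ) : ℤ) : ℂ) * FF (a - j) (b - ((m : ℤ) - j) - 1) x)) x :=
        HasDerivAt.fun_sum fun j _ => (FF_hasDerivAt _ _ x).const_mul (c j)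
      rw [hder.deriv]
      simp only [add_mul, Finset.sum_add_distrib]
      have hS1 : ∑ j ∈ Finset.range (m + 1 + 1),
          (if j = 0 then (0:ℂ) else c (j - 1) * ((a - ((j - 1 : ℕ) : ℤ) : ℤ) : ℂ)) *
            FF (a - j) (b - (((m + 1 : ℕ) : ℤ) - j)) x
          = ∑ j ∈ Finset.range (m + 1), c j *
            ((((a - j : ℤ) : ℤ) : ℂ) * FF (a - j - 1) (b - ((m : ℤ) - j)) x) := by
        rw [Finset.sum_range_succ']
        simp only [Nat.succ_ne_zero, if_false, Nat.add_sub_cancel, eq_self_iff_true, if_true,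
          zero_mul, add_zero]
        refine Finset.sum_congr rfl fun j hj => ?_
        have e1 : a - ((j + 1 : ℕ) : ℤ) = a - j - 1 := by push_cast; ring
        have e2 : b - (((m + 1 : ℕ) : ℤ) - ((j + 1 : ℕ) : ℤ)) = b - ((m : ℤ) - j) := by
          push_cast; ring
        rw [e1, e2]
        ring
      have hS2 : ∑ j ∈ Finset.range (m + 1 + 1),
          (c j * ((b - ((m : ℤ) - (j : ℤ)) : ℤ) : ℂ)) *
            FF (a - j) (b - (((m + 1 : ℕ) : ℤ) - j)) x
          = ∑ j ∈ Finset.range (m + 1), c j *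
            ((((b - ((m : ℤ) - j) : ℤ) : ℤ) : ℂ) * FF (a - j) (b - ((m : ℤ) - j) - 1) x) := by
        rw [Finset.sum_range_succ, hc0 _ (by omega), zero_mul, zero_mul, add_zero]
        refine Finset.sum_congr rfl fun j hj => ?_
        have e2 : b - (((m + 1 : ℕ) : ℤ) - (j : ℤ)) = b - ((m : ℤ) - j) - 1 := by
          push_cast; ring
        rw [e2]
        ring
      rw [hS1, hS2, ← Finset.sum_add_distrib]
      refine Finset.sum_congr rfl fun j hj => ?_
      ring

lemma iter_FF_diff (m : ℕ) (a b : ℤ) (x : ℝ) :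
    DifferentiableAt ℝ (deriv^[m] (FF a b)) x := by
  obtain ⟨c, _, _, hrep⟩ := iter_FF m a b
  rw [hrep]
  exact DifferentiableAt.fun_sum fun j _ => (FF_diff _ _ x).const_mul (c j)

lemma iter_FF_norm (m : ℕ) (a b : ℤ) (x : ℝ) :
    ‖deriv^[m] (FF a b) x‖ ≤
      (m + 1 : ℝ) * ((|a| + |b| + 2 * m : ℤ) : ℝ) ^ m *
        (x ^ 2 + 1) ^ ((((a + b : ℤ) : ℝ) - m) / 2) := by
  obtain ⟨c, hc, _, hrep⟩ := iter_FF m a b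
  rw [hrep]
  calc ‖∑ j ∈ Finset.range (m + 1), c j * FF (a - j) (b - ((m : ℤ) - j)) x‖
      ≤ ∑ j ∈ Finset.range (m + 1), ‖c j * FF (a - j) (b - ((m : ℤ) - j)) x‖ :=
        norm_sum_le _ _
    _ ≤ ∑ j ∈ Finset.range (m + 1),
          ((|a| + |b| + 2 * m : ℤ) : ℝ) ^ m * (x ^ 2 + 1) ^ ((((a + b : ℤ) : ℝ) - m) / 2) := by
        refine Finset.sum_le_sum fun j _ => ?_
        rw [norm_mul, norm_FF]
        have harg : ((a - j + (b - ((m : ℤ) - j)) : ℤ) : ℝ) = ((a + b : ℤ) : ℝ) - m := by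
          push_cast; ring
        rw [harg]
        exact mul_le_mul_of_nonneg_right (hc j) (Real.rpow_nonneg (le_of_lt (w_pos x)) _)
    _ = (m + 1 : ℝ) * ((|a| + |b| + 2 * m : ℤ) : ℝ) ^ m *
          (x ^ 2 + 1) ^ ((((a + b : ℤ) : ℝ) - m) / 2) := by
        rw [Finset.sum_const, Finset.card_range, nsmul_eq_mul]
        push_cast
        ring

lemma iter_const_mul (c : ℂ) (a b : ℤ) (m : ℕ) :
    deriv^[m] (fun x => c * FF a b x) = fun x => c * deriv^[m] (FF a b) x := by
  induction m with
  | zero => rfl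
  | succ m ih =>
    rw [Function.iterate_succ_apply', Function.iterate_succ_apply', ih]
    funext x
    rw [deriv_const_mul c (iter_FF_diff m a b x)]

lemma psi_eq_FF (k ν : ℤ) : psi k ν = FF ν (-(k + 1) - ν) := by
  funext x
  rw [psi, FF, div_zpow, div_eq_mul_inv, ← zpow_neg,
    show -(k + 1) - ν = -(k + 1) + -ν by ring, zpow_add₀ (add_I_ne x)]
  ring

lemma ntilde_abs_le (k : ℤ) (n : ℕ) : |ntilde k n| ≤ |k| + n + 2 := by
  have h1 : |⌊(-(k : ℚ) - 1) / 2⌋| ≤ |k| + 1 := by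
    have hk1 : -((|k| : ℚ)) ≤ (k : ℚ) := by exact_mod_cast neg_abs_le k
    have hk2 : (k : ℚ) ≤ (|k| : ℚ) := by exact_mod_cast le_abs_self k
    rw [abs_le]
    constructor
    · rw [Int.le_floor]
      push_cast
      linarith
    · have : (⌊(-(k : ℚ) - 1) / 2⌋ : ℚ) ≤ (-(k : ℚ) - 1) / 2 := Int.floor_le _
      have h2 : (-(k : ℚ) - 1) / 2 ≤ ((|k| + 1 : ℤ) : ℚ) := by push_cast; linarith
      exact_mod_cast this.trans h2
  have h2 : |⌊((n : ℚ) + 1) / 2⌋| ≤ (n : ℤ) + 1 := by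
    rw [abs_le]
    constructor
    · rw [Int.le_floor]
      push_cast
      have : (0:ℚ) ≤ (n:ℚ) := by positivity
      linarith
    · have : (⌊((n : ℚ) + 1) / 2⌋ : ℚ) ≤ ((n : ℚ) + 1) / 2 := Int.floor_le _
      have h3 : ((n : ℚ) + 1) / 2 ≤ (((n : ℤ) + 1 : ℤ) : ℚ) := by push_cast; linarith
      exact_mod_cast this.trans h3
  rw [ntilde]
  refine (abs_add_le _ _).trans ?_
  rw [abs_mul]
  have h4 : |if Even ((n : ℤ) + k + 1) then (1:ℤ) else -1| = 1 := by
    split <;> simp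
  rw [h4, one_mul]
  omega

lemma poly_bound (q : Polynomial ℂ) : ∃ K : ℝ, 0 ≤ K ∧ ∀ x : ℝ,
    ‖q.eval (x : ℂ)‖ ≤ K * (x ^ 2 + 1) ^ ((q.natDegree : ℝ) / 2) := by
  refine ⟨∑ i ∈ Finset.range (q.natDegree + 1), ‖q.coeff i‖,
    Finset.sum_nonneg fun i _ => norm_nonneg _, fun x => ?_⟩
  have hw : (0:ℝ) < x ^ 2 + 1 := by positivity
  have hw1 : (1:ℝ) ≤ x ^ 2 + 1 := by nlinarith [sq_nonneg x]
  rw [Polynomial.eval_eq_sum_range, Finset.sum_mul]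
  refine (norm_sum_le _ _).trans (Finset.sum_le_sum fun i hi => ?_)
  rw [norm_mul, norm_pow]
  refine mul_le_mul_of_nonneg_left ?_ (norm_nonneg _)
  have h1 : ‖((x : ℝ) : ℂ)‖ = |x| := by
    rw [Complex.norm_real, Real.norm_eq_abs]
  rw [h1]
  have h2 : |x| ≤ (x ^ 2 + 1) ^ ((1:ℝ) / 2) := by
    rw [show (x ^ 2 + 1 : ℝ) ^ ((1:ℝ)/2) = Real.sqrt (x ^ 2 + 1) by
      rw [Real.sqrt_eq_rpow]]
    rw [← Real.sqrt_sq_eq_abs]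
    exact Real.sqrt_le_sqrt (by nlinarith [sq_nonneg x])
  calc |x| ^ i ≤ ((x ^ 2 + 1) ^ ((1:ℝ)/2)) ^ i :=
        pow_le_pow_left₀ (abs_nonneg x) h2 i
    _ = (x ^ 2 + 1) ^ ((i : ℝ) / 2) := by
        rw [← Real.rpow_natCast ((x ^ 2 + 1) ^ ((1:ℝ)/2)) i, ← Real.rpow_mul (le_of_lt hw)]
        congr 1
        ring
    _ ≤ (x ^ 2 + 1) ^ ((q.natDegree : ℝ) / 2) := by
        refine Real.rpow_le_rpow_of_exponent_le hw1 ?_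
        have h3 : i ≤ q.natDegree := by
          have := Finset.mem_range.mp hi; omega
        have h4 : (i : ℝ) ≤ q.natDegree := by exact_mod_cast h3
        linarith

end Stmt11Aux

/-- In the band-matrix setup (polynomial coefficients `p_0, …, p_M`
with `p_M ≠ 0`, integer `k₀ ≥ 0` and `k₀◊ ≤ k₀ - s₀`): there exists a real polynomial
`A` of degree at most `M` such that `|b_m^n| ≤ A(n)` for all `m, n ∈ ℕ`. -/
theorem stmt11 (M : ℕ) (hM : 1 ≤ M) (p : ℕ → Polynomial ℂ) (hpM : p M ≠ 0)
    (k₀ : ℤ) (hk₀ : 0 ≤ k₀) (kd : ℤ) (hkd : kd ≤ k₀ - s0 M p) :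
    ∃ A : Polynomial ℝ, A.natDegree ≤ M ∧
      ∀ m n : ℕ, ‖bmat M p k₀ kd m n‖ ≤ A.eval (n : ℝ) := by
  classical
  open Stmt11Aux in
  choose K hK0 hK using fun m => Stmt11Aux.poly_bound (p m)
  set Ktot : ℝ := ∑ m ∈ Finset.range (M + 1), K m * (m + 1) with hKtot_def
  set c₁ : ℝ := 3 * (k₀ : ℝ) + 2 * M + 5 with hc₁_def
  have hc₁_ge : (5 : ℝ) ≤ c₁ := by
    have h1 : (0:ℝ) ≤ (k₀ : ℝ) := by exact_mod_cast hk₀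
    have h2 : (0:ℝ) ≤ (M : ℝ) := by positivity
    simp only [hc₁_def]
    linarith
  refine ⟨Polynomial.C (Real.pi * Ktot) *
      (Polynomial.C 2 * Polynomial.X + Polynomial.C c₁) ^ M, ?_, ?_⟩
  · refine (Polynomial.natDegree_mul_le).trans ?_
    rw [Polynomial.natDegree_C, zero_add]
    refine (Polynomial.natDegree_pow_le).trans ?_
    have := Polynomial.natDegree_linear_le (a := (2:ℝ)) (b := c₁)
    calc M * (Polynomial.C 2 * Polynomial.X + Polynomial.C c₁ : Polynomial ℝ).natDegree
        ≤ M * 1 := Nat.mul_le_mul_left M this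
      _ = M := by ring
  intro mm n
  set a : ℤ := ntilde k₀ n with ha_def
  set b : ℤ := -(k₀ + 1) - a with hb_def
  have hab : a + b = -(k₀ + 1) := by rw [hb_def]; ring
  set β : ℝ := 2 * (n : ℝ) + c₁ with hβ_def
  have hβ1 : (1 : ℝ) ≤ β := by
    have h1 : (0:ℝ) ≤ (n : ℝ) := by positivity
    simp only [hβ_def]
    linarith
  -- bound on |a| + |b| + 2m
  have habs : ∀ m : ℕ, m ∈ Finset.range (M + 1) →
      ((|a| + |b| + 2 * m : ℤ) : ℝ) ≤ β := by
    intro m hm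
    have hm' : m ≤ M := by have := Finset.mem_range.mp hm; omega
    have h1 : |a| ≤ |k₀| + n + 2 := ntilde_abs_le k₀ n
    have h2 : |b| ≤ (k₀ + 1) + |a| := by
      rw [hb_def]
      calc |-(k₀ + 1) - a| ≤ |-(k₀+1)| + |a| := abs_sub _ _
        _ = |k₀ + 1| + |a| := by rw [abs_neg]
        _ ≤ (k₀ + 1) + |a| := by
            have : |k₀ + 1| = k₀ + 1 := abs_of_nonneg (by omega)
            omega
    have h3 : |k₀| = k₀ := abs_of_nonneg hk₀
    have hz : |a| + |b| + 2 * (m : ℤ) ≤ 2 * n + (3 * k₀ + 2 * M + 5) := by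
      have : (m : ℤ) ≤ (M : ℤ) := by exact_mod_cast hm'
      omega
    calc ((|a| + |b| + 2 * m : ℤ) : ℝ) ≤ ((2 * n + (3 * k₀ + 2 * M + 5) : ℤ) : ℝ) := by
          exact_mod_cast hz
      _ = β := by simp only [hβ_def, hc₁_def]; push_cast; ring
  -- representation of ebasis k₀ n
  have he : ebasis k₀ n = fun x => (((Real.sqrt Real.pi)⁻¹ : ℝ) : ℂ) * FF a b x := by
    funext x
    rw [ebasis, ← ha_def, psi_eq_FF, hb_def]
  have hpi1 : ‖(((Real.sqrt Real.pi)⁻¹ : ℝ) : ℂ)‖ ≤ 1 := by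
    rw [Complex.norm_real, Real.norm_eq_abs, abs_of_nonneg (by positivity)]
    refine inv_le_one_of_one_le₀ ?_
    rw [show (1:ℝ) = Real.sqrt 1 by simp]
    exact Real.sqrt_le_sqrt (by linarith [Real.pi_gt_three])
  -- pointwise bound
  have hpt : ∀ x : ℝ, ‖Pop M p (ebasis k₀ n) x * (starRingEnd ℂ) (ebasis kd mm x) *
      ((((x ^ 2 + 1) ^ kd : ℝ)) : ℂ)‖ ≤ Ktot * β ^ M * (1 + x ^ 2)⁻¹ := by
    intro x
    have hw0 := w_pos x
    have hw1 := one_le_w x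
    -- the weight factor together with the conjugate factor
    have hR : ‖(starRingEnd ℂ) (ebasis kd mm x)‖ * ‖((((x ^ 2 + 1) ^ kd : ℝ)) : ℂ)‖ ≤
        (x ^ 2 + 1) ^ (((-(kd + 1) : ℤ) : ℝ) / 2 + (kd : ℝ)) := by
      rw [Real.rpow_add hw0]
      refine mul_le_mul ?_ ?_ (norm_nonneg _) (Real.rpow_nonneg (le_of_lt hw0) _)
      · rw [RCLike.norm_conj, ebasis, norm_mul, psi_eq_FF, norm_FF]
        have harg : (ntilde kd mm + (-(kd + 1) - ntilde kd mm) : ℤ) = -(kd + 1) := by ring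
        rw [harg]
        exact mul_le_of_le_one_left (Real.rpow_nonneg (le_of_lt hw0) _) hpi1
      · rw [Complex.norm_real, Real.norm_eq_abs, abs_of_pos (zpow_pos hw0 kd),
          ← Real.rpow_intCast]
    calc ‖Pop M p (ebasis k₀ n) x * (starRingEnd ℂ) (ebasis kd mm x) *
          ((((x ^ 2 + 1) ^ kd : ℝ)) : ℂ)‖
        = ‖Pop M p (ebasis k₀ n) x‖ * (‖(starRingEnd ℂ) (ebasis kd mm x)‖ *
            ‖((((x ^ 2 + 1) ^ kd : ℝ)) : ℂ)‖) := by
          rw [norm_mul, norm_mul]; ring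
      _ ≤ (∑ m ∈ Finset.range (M + 1), ‖(p m).eval (x : ℂ) * deriv^[m] (ebasis k₀ n) x‖) *
            ((x ^ 2 + 1) ^ (((-(kd + 1) : ℤ) : ℝ) / 2 + (kd : ℝ))) := by
          refine mul_le_mul (by rw [Pop]; exact norm_sum_le _ _) hR
            (mul_nonneg (norm_nonneg _) (norm_nonneg _))
            (Finset.sum_nonneg fun _ _ => norm_nonneg _)
      _ = ∑ m ∈ Finset.range (M + 1), ‖(p m).eval (x : ℂ) * deriv^[m] (ebasis k₀ n) x‖ *
            ((x ^ 2 + 1) ^ (((-(kd + 1) : ℤ) : ℝ) / 2 + (kd : ℝ))) := by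
          rw [Finset.sum_mul]
      _ ≤ ∑ m ∈ Finset.range (M + 1), K m * (m + 1) * β ^ M * (1 + x ^ 2)⁻¹ := by
          refine Finset.sum_le_sum fun m hm => ?_
          have hmM : m ≤ M := by have := Finset.mem_range.mp hm; omega
          -- bound on derivative of ebasis
          have hder : ‖deriv^[m] (ebasis k₀ n) x‖ ≤
              ((m : ℝ) + 1) * β ^ M * (x ^ 2 + 1) ^ ((((a + b : ℤ) : ℝ) - m) / 2) := by
            rw [he, iter_const_mul, norm_mul]
            calc ‖(((Real.sqrt Real.pi)⁻¹ : ℝ) : ℂ)‖ * ‖deriv^[m] (FF a b) x‖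
                ≤ 1 * ‖deriv^[m] (FF a b) x‖ :=
                  mul_le_mul_of_nonneg_right hpi1 (norm_nonneg _)
              _ = ‖deriv^[m] (FF a b) x‖ := one_mul _
              _ ≤ (m + 1 : ℝ) * ((|a| + |b| + 2 * m : ℤ) : ℝ) ^ m *
                    (x ^ 2 + 1) ^ ((((a + b : ℤ) : ℝ) - m) / 2) := iter_FF_norm m a b x
              _ ≤ ((m : ℝ) + 1) * β ^ M * (x ^ 2 + 1) ^ ((((a + b : ℤ) : ℝ) - m) / 2) := by
                  refine mul_le_mul_of_nonneg_right ?_ (Real.rpow_nonneg (le_of_lt hw0) _)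
                  refine mul_le_mul_of_nonneg_left ?_ (by positivity)
                  have hnn : (0:ℝ) ≤ ((|a| + |b| + 2 * m : ℤ) : ℝ) := by
                    have : (0:ℤ) ≤ |a| + |b| + 2 * m := by positivity
                    exact_mod_cast this
                  calc ((|a| + |b| + 2 * m : ℤ) : ℝ) ^ m ≤ β ^ m :=
                        pow_le_pow_left₀ hnn (habs m hm) m
                    _ ≤ β ^ M := pow_le_pow_right₀ hβ1 hmM
          -- key exponent inequality
          have hkey : ((p m).natDegree : ℝ) / 2 + ((((a + b : ℤ) : ℝ) - m) / 2) +
              ((((-(kd + 1) : ℤ)) : ℝ) / 2 + (kd : ℝ)) ≤ -1 := by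
            have hsup : ((p m).natDegree : ℤ) - (m : ℤ) ≤ s0 M p :=
              Finset.le_sup' (fun m => ((p m).natDegree : ℤ) - (m : ℤ)) hm
            have hz : ((p m).natDegree : ℤ) - m + kd ≤ k₀ := by omega
            have hz' : ((p m).natDegree : ℝ) - m + kd ≤ (k₀ : ℝ) := by exact_mod_cast hz
            rw [hab]
            push_cast
            linarith
          have hwle : (x ^ 2 + 1) ^ (((p m).natDegree : ℝ) / 2) *
              (x ^ 2 + 1) ^ ((((a + b : ℤ) : ℝ) - m) / 2) *
              (x ^ 2 + 1) ^ (((-(kd + 1) : ℤ) : ℝ) / 2 + (kd : ℝ)) ≤ (1 + x ^ 2)⁻¹ := by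
            rw [← Real.rpow_add hw0, ← Real.rpow_add hw0]
            calc (x ^ 2 + 1) ^ (((p m).natDegree : ℝ) / 2 + ((((a + b : ℤ) : ℝ) - m) / 2) +
                  ((((-(kd + 1) : ℤ)) : ℝ) / 2 + (kd : ℝ)))
                ≤ (x ^ 2 + 1) ^ ((-1 : ℝ)) := Real.rpow_le_rpow_of_exponent_le hw1 hkey
              _ = (1 + x ^ 2)⁻¹ := by rw [Real.rpow_neg_one]; ring_nf
          rw [norm_mul]
          calc ‖(p m).eval (x : ℂ)‖ * ‖deriv^[m] (ebasis k₀ n) x‖ *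
                ((x ^ 2 + 1) ^ (((-(kd + 1) : ℤ) : ℝ) / 2 + (kd : ℝ)))
              ≤ (K m * (x ^ 2 + 1) ^ (((p m).natDegree : ℝ) / 2)) *
                (((m : ℝ) + 1) * β ^ M * (x ^ 2 + 1) ^ ((((a + b : ℤ) : ℝ) - m) / 2)) *
                ((x ^ 2 + 1) ^ (((-(kd + 1) : ℤ) : ℝ) / 2 + (kd : ℝ))) := by
                refine mul_le_mul_of_nonneg_right ?_ (Real.rpow_nonneg (le_of_lt hw0) _)
                exact mul_le_mul (hK m x) hder (norm_nonneg _)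
                  (mul_nonneg (hK0 m) (Real.rpow_nonneg (le_of_lt hw0) _))
            _ = K m * ((m : ℝ) + 1) * β ^ M *
                  ((x ^ 2 + 1) ^ (((p m).natDegree : ℝ) / 2) *
                   (x ^ 2 + 1) ^ ((((a + b : ℤ) : ℝ) - m) / 2) *
                   (x ^ 2 + 1) ^ (((-(kd + 1) : ℤ) : ℝ) / 2 + (kd : ℝ))) := by
                ring
            _ ≤ K m * ((m : ℝ) + 1) * β ^ M * (1 + x ^ 2)⁻¹ := by
                refine mul_le_mul_of_nonneg_left hwle ?_
                have := hK0 m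
                positivity
            _ = K m * (m + 1) * β ^ M * (1 + x ^ 2)⁻¹ := by norm_num
      _ = Ktot * β ^ M * (1 + x ^ 2)⁻¹ := by
          rw [hKtot_def, Finset.sum_mul, Finset.sum_mul]
  -- integrate
  have hint : Integrable (fun x : ℝ => Ktot * β ^ M * (1 + x ^ 2)⁻¹) :=
    integrable_inv_one_add_sq.const_mul _
  calc ‖bmat M p k₀ kd mm n‖
      ≤ ∫ x : ℝ, Ktot * β ^ M * (1 + x ^ 2)⁻¹ := by
        rw [bmat]
        exact norm_integral_le_of_norm_le hint (Filter.Eventually.of_forall hpt)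
    _ = Ktot * β ^ M * Real.pi := by
        rw [integral_const_mul, integral_univ_inv_one_add_sq]
    _ ≤ Polynomial.eval (n : ℝ) (Polynomial.C (Real.pi * Ktot) *
          (Polynomial.C 2 * Polynomial.X + Polynomial.C c₁) ^ M) := by
        simp only [Polynomial.eval_mul, Polynomial.eval_pow, Polynomial.eval_add,
          Polynomial.eval_C, Polynomial.eval_X]
        rw [← hβ_def]
        ring_nf
        exact le_refl _
end
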